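/- arXiv:1310.2877 — 9 statements merged into one kernel-verified Lean document; each statement's English description precedes it below -/
import Mathlib

section
/- For a prime p and positive integers s and d with d ≤ s, there exist d nonnegative integers r_1, ..., r_d with p^{r_1} + ... + p^{r_d} = s if and only if digits_p(s) ≤ d ≤ s and d ≡ s (mod p-1). -/
/-- The sum of the digits of `n` in base `p`. -/
def digitSum (p n : ℕ) : ℕ := (Nat.digits p n).sum

namespace SumPowAux

variable {p : ℕ}

lemma digitSum_def (hp : 1 < p) {n : ℕ} (hn : 0 < n) :
    digitSum p n = n % p + digitSum p (n / p) := by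
  unfold digitSum
  rw [Nat.digits_def' hp hn, List.sum_cons]

lemma digitSum_one (hp : 1 < p) : digitSum p 1 = 1 := by
  unfold digitSum
  rw [Nat.digits_def' hp one_pos, Nat.mod_eq_of_lt hp, Nat.div_eq_of_lt hp]
  simp

lemma digitSum_pow (hp : 1 < p) (a : ℕ) : digitSum p (p ^ a) = 1 := by
  induction a with
  | zero => simpa using digitSum_one hp
  | succ a ih =>
    have hpos : 0 < p ^ (a + 1) := pow_pos (by omega) _
    rw [digitSum_def hp hpos, pow_succ]
    have hmod : p ^ a * p % p = 0 := Nat.mul_mod_left _ _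
    have hdiv : p ^ a * p / p = p ^ a := Nat.mul_div_cancel _ (by omega)
    rw [hmod, hdiv, ih]

lemma digitSum_add_le (hp : 1 < p) (m n : ℕ) :
    digitSum p (m + n) ≤ digitSum p m + digitSum p n := by
  suffices H : ∀ N m n, m + n ≤ N → digitSum p (m + n) ≤ digitSum p m + digitSum p n from
    H (m + n) m n le_rfl
  intro N
  induction N using Nat.strong_induction_on with
  | _ N ih =>
    intro m n hmn
    rcases Nat.eq_zero_or_pos m with hm | hm
    · subst hm; simp [digitSum]
    rcases Nat.eq_zero_or_pos n with hn | hn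
    · subst hn; simp [digitSum]
    have hp0 : 0 < p := by omega
    rw [digitSum_def hp (by omega), digitSum_def hp hm, digitSum_def hp hn]
    rw [Nat.add_div hp0, Nat.add_mod]
    have hmp : m % p < p := Nat.mod_lt _ hp0
    have hnp : n % p < p := Nat.mod_lt _ hp0
    have hmd : m / p < m := Nat.div_lt_self hm hp
    have hnd : n / p < n := Nat.div_lt_self hn hp
    by_cases hc : p ≤ m % p + n % p
    · rw [if_pos hc]
      have h1 := ih (m / p + n / p + 1) (by omega) (m / p + n / p) 1 le_rfl
      have h2 := ih (m / p + n / p + 1) (by omega) (m / p) (n / p) (by omega)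
      have h3 : (m % p + n % p) % p = m % p + n % p - p := by
        rw [Nat.mod_eq_sub_mod hc, Nat.mod_eq_of_lt (by omega)]
      rw [digitSum_one hp] at h1
      omega
    · simp only [if_neg hc, Nat.add_zero]
      have h2 := ih (m / p + n / p) (by omega) (m / p) (n / p) le_rfl
      have h3 : (m % p + n % p) % p = m % p + n % p := Nat.mod_eq_of_lt (by omega)
      omega

lemma digitSum_listSum_le (hp : 1 < p) (l : List ℕ) :
    digitSum p (l.map (p ^ ·)).sum ≤ l.length := by
  induction l with
  | nil => simp [digitSum]
  | cons a l ih =>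
    simp only [List.map_cons, List.sum_cons, List.length_cons]
    calc digitSum p (p ^ a + (l.map (p ^ ·)).sum)
        ≤ digitSum p (p ^ a) + digitSum p (l.map (p ^ ·)).sum := digitSum_add_le hp _ _
      _ ≤ l.length + 1 := by
          have := digitSum_pow hp a; omega

lemma listSum_modEq (hp : 1 < p) (l : List ℕ) :
    (l.map (p ^ ·)).sum ≡ l.length [MOD p - 1] := by
  induction l with
  | nil => rfl
  | cons a l ih =>
    simp only [List.map_cons, List.sum_cons, List.length_cons]
    have hpm : p ≡ 1 [MOD p - 1] :=
      ((Nat.modEq_iff_dvd' (by omega : 1 ≤ p)).mpr dvd_rfl).symm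
    have := (hpm.pow a).add ih
    simpa [one_pow, Nat.add_comm] using this

lemma exists_list_digitSum (hp : 1 < p) (n : ℕ) : ∃ l : List ℕ,
    l.length = digitSum p n ∧ (l.map (p ^ ·)).sum = n := by
  induction n using Nat.strong_induction_on with
  | _ n ih =>
    rcases Nat.eq_zero_or_pos n with h0 | h0
    · exact ⟨[], by simp [h0, digitSum]⟩
    obtain ⟨l, hl, hsum⟩ := ih (n / p) (Nat.div_lt_self h0 hp)
    refine ⟨List.replicate (n % p) 0 ++ l.map (· + 1), ?_, ?_⟩
    · simp [hl, digitSum_def hp h0]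
    · rw [List.map_append, List.sum_append, List.map_map]
      have h1 : (List.replicate (n % p) 0).map (p ^ ·) = List.replicate (n % p) 1 := by
        simp
      have h2 : (l.map ((p ^ ·) ∘ (· + 1))).sum = (l.map (p ^ ·)).sum * p := by
        have heq : ((p ^ ·) ∘ (· + 1)) = fun a : ℕ => p ^ a * p := by
          funext a; simp [pow_succ]
        rw [heq, ← List.sum_map_mul_right]
      rw [h1, h2, hsum, List.sum_replicate, smul_eq_mul, mul_one]
      have := Nat.mod_add_div' n p
      omega

lemma step (hp : 1 < p) {l : List ℕ} {s : ℕ} (hsum : (l.map (p ^ ·)).sum = s)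
    (hlt : l.length < s) :
    ∃ l' : List ℕ, l'.length = l.length + (p - 1) ∧ (l'.map (p ^ ·)).sum = s := by
  have hex : ∃ a ∈ l, a ≠ 0 := by
    by_contra h
    push_neg at h
    have hrep : l.map (p ^ ·) = List.replicate l.length 1 := by
      rw [List.eq_replicate_iff]
      refine ⟨by simp, ?_⟩
      intro b hb
      simp only [List.mem_map] at hb
      obtain ⟨a, ha, rfl⟩ := hb
      rw [h a ha, pow_zero]
    rw [hrep, List.sum_replicate, smul_eq_mul, mul_one] at hsum
    omega
  obtain ⟨a, ha, ha0⟩ := hex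
  obtain ⟨l₁, l₂, rfl⟩ := List.append_of_mem ha
  refine ⟨List.replicate p (a - 1) ++ l₁ ++ l₂, ?_, ?_⟩
  · simp only [List.length_append, List.length_replicate, List.length_cons]
    omega
  · have hpa : p * p ^ (a - 1) = p ^ a := by
      obtain ⟨b, rfl⟩ : ∃ b, a = b + 1 := ⟨a - 1, by omega⟩
      rw [Nat.add_sub_cancel, pow_succ, Nat.mul_comm]
    simp only [List.map_append, List.sum_append, List.map_replicate, List.sum_replicate,
      smul_eq_mul, List.map_cons, List.sum_cons] at hsum ⊢
    omega

lemma extend (hp : 1 < p) : ∀ k (l : List ℕ) (s d : ℕ), d - l.length ≤ k →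
    (l.map (p ^ ·)).sum = s → l.length ≤ d → d ≤ s → l.length ≡ d [MOD p - 1] →
    ∃ l' : List ℕ, l'.length = d ∧ (l'.map (p ^ ·)).sum = s := by
  intro k
  induction k with
  | zero =>
    intro l s d hk hsum hld _ _
    exact ⟨l, by omega, hsum⟩
  | succ k ih =>
    intro l s d hk hsum hld hds hmod
    rcases eq_or_lt_of_le hld with heq | hlt
    · exact ⟨l, heq, hsum⟩
    have hdvd : (p - 1) ∣ d - l.length := (Nat.modEq_iff_dvd' hld).mp hmod
    have hge : p - 1 ≤ d - l.length := Nat.le_of_dvd (by omega) hdvd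
    obtain ⟨l'', hlen, hsum''⟩ := step hp hsum (by omega)
    refine ih l'' s d (by omega) hsum'' (by omega) hds ?_
    rw [hlen]
    have hz : l.length + (p - 1) ≡ l.length + 0 [MOD p - 1] :=
      Nat.ModEq.add_left _ ((Nat.modEq_zero_iff_dvd).mpr dvd_rfl)
    simpa using hz.trans hmod

end SumPowAux

/-- For a prime `p` and positive integers `s` and `d` with `d ≤ s`, `s` can be written as a
sum of `d` powers of `p` iff `digits_p(s) ≤ d ≤ s` and `d ≡ s (mod p-1)`. -/
theorem sum_of_d_pow_iff (p s d : ℕ) (hp : Nat.Prime p) (hs : 0 < s) (hd : 0 < d)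
    (hds : d ≤ s) :
    (∃ r : Fin d → ℕ, ∑ i, p ^ r i = s) ↔
      (digitSum p s ≤ d ∧ d ≤ s ∧ d ≡ s [MOD p - 1]) := by
  have hp1 : 1 < p := hp.one_lt
  constructor
  · rintro ⟨r, hr⟩
    refine ⟨?_, hds, ?_⟩
    · have := SumPowAux.digitSum_listSum_le hp1 (List.ofFn r)
      rw [List.map_ofFn, List.sum_ofFn] at this
      simpa [hr, List.length_ofFn] using this
    · have h := SumPowAux.listSum_modEq hp1 (List.ofFn r)
      rw [List.map_ofFn, List.sum_ofFn, List.length_ofFn] at h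
      simp only [Function.comp_def] at h
      rw [hr] at h
      exact h.symm
  · rintro ⟨h1, h2, h3⟩
    obtain ⟨l₀, hlen₀, hsum₀⟩ := SumPowAux.exists_list_digitSum hp1 s
    have hmod₀ : l₀.length ≡ d [MOD p - 1] := by
      have hs0 := SumPowAux.listSum_modEq hp1 l₀
      rw [hsum₀] at hs0
      exact hs0.symm.trans h3.symm
    obtain ⟨l, hlenl, hsuml⟩ :=
      SumPowAux.extend hp1 (d - l₀.length) l₀ s d le_rfl hsum₀ (by omega) h2 hmod₀
    subst hlenl
    refine ⟨l.get, ?_⟩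
    have heq : ∑ i, p ^ l.get i = ((List.ofFn l.get).map (p ^ ·)).sum := by
      rw [List.map_ofFn, List.sum_ofFn]; rfl
    rw [heq, List.ofFn_get, hsuml]
end

section
/- For integers s ≥ 2, the greatest common divisor of the binomial coefficients C(s,k) for 0 < k < s equals p if s is a power of a prime p, and equals 1 otherwise. -/
open Nat Finset

private lemma lucas_aux {q m : ℕ} (hq : q.Prime) (hm : ¬ q ∣ m) (a : ℕ) :
    ¬ q ∣ (q ^ a * m).choose (q ^ a) := by
  haveI : Fact q.Prime := ⟨hq⟩
  induction a with
  | zero => simpa using hm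
  | succ a ih =>
    intro hd
    have h := @Choose.choose_modEq_choose_mod_mul_choose_div_nat
      (q ^ (a + 1) * m) (q ^ (a + 1)) q _
    have e1 : q ^ (a + 1) * m = q * (q ^ a * m) := by ring
    have e2 : q ^ (a + 1) = q * q ^ a := by ring
    rw [e1, e2, Nat.mul_mod_right, Nat.mul_mod_right,
      Nat.mul_div_cancel_left _ hq.pos, Nat.mul_div_cancel_left _ hq.pos,
      Nat.choose_self, one_mul] at h
    rw [e1, e2] at hd
    exact ih ((Nat.modEq_zero_iff_dvd).1
      (h.symm.trans ((Nat.modEq_zero_iff_dvd).2 hd)))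

private lemma ppow_aux {p : ℕ} (hp : p.Prime) (n : ℕ) (hn : 1 ≤ n) :
    ¬ p ^ 2 ∣ (p ^ n).choose (p ^ (n - 1)) := by
  have hkn : p ^ (n - 1) ≤ p ^ n := Nat.pow_le_pow_right hp.pos (by omega)
  have h := Nat.Prime.emultiplicity_choose_prime_pow hp hkn (pow_pos hp.pos _).ne'
  rw [multiplicity_pow_self_of_prime hp.prime] at h
  have h1 : n - (n - 1) = 1 := by omega
  rw [h1] at h
  have := (emultiplicity_eq_coe.1 h).2
  simpa using this

/-- For `s ≥ 2`, the gcd of the binomial coefficients `C(s,k)` for `0 < k < s` equals `p`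
when `s` is a power of a prime `p`, and equals `1` otherwise. -/
theorem gcd_choose_eq (s : ℕ) (hs : 2 ≤ s) :
    (∀ p r : ℕ, Nat.Prime p → s = p ^ r →
        Finset.gcd (Finset.Ioo 0 s) (fun k => s.choose k) = p) ∧
    ((¬ ∃ p r : ℕ, Nat.Prime p ∧ s = p ^ r) →
        Finset.gcd (Finset.Ioo 0 s) (fun k => s.choose k) = 1) := by
  set g := Finset.gcd (Finset.Ioo 0 s) (fun k => s.choose k) with hg
  have h1mem : 1 ∈ Finset.Ioo 0 s := by simp; omega
  have hgs : g ∣ s := by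
    have := Finset.gcd_dvd (f := fun k => s.choose k) h1mem
    simp only [Nat.choose_one_right] at this
    exact this
  constructor
  · rintro p r hp rfl
    have hr : 1 ≤ r := by
      by_contra h
      interval_cases r
      simp at hs
    -- p divides g
    have hpg : p ∣ g := by
      apply Finset.dvd_gcd
      intro k hk
      simp only [Finset.mem_Ioo] at hk
      exact Nat.Prime.dvd_choose_pow hp (by omega) (by omega)
    -- g divides p^r, hence is a power of p
    obtain ⟨i, hi, hgi⟩ := (Nat.dvd_prime_pow hp).1 hgs
    have hi1 : 1 ≤ i := by
      by_contra h
      have hi0 : i = 0 := by omega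
      rw [hi0, pow_zero] at hgi
      rw [hgi] at hpg
      exact hp.ne_one (Nat.dvd_one.mp hpg)
    -- g divides C(p^r, p^(r-1)) whose p-adic valuation is 1
    have hmem : p ^ (r - 1) ∈ Finset.Ioo 0 (p ^ r) := by
      simp only [Finset.mem_Ioo]
      exact ⟨pow_pos hp.pos _, Nat.pow_lt_pow_right hp.one_lt (by omega)⟩
    have hgc : p ^ i ∣ (p ^ r).choose (p ^ (r - 1)) := by
      rw [← hgi]; exact Finset.gcd_dvd hmem
    have : i < 2 := by
      by_contra h
      exact ppow_aux hp r hr ((pow_dvd_pow p (by omega)).trans hgc)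
    have hi2 : i = 1 := by omega
    rw [hgi, hi2, pow_one]
  · intro hnp
    by_contra hne
    obtain ⟨q, hq, hqg⟩ := Nat.exists_prime_and_dvd hne
    have hqs : q ∣ s := hqg.trans hgs
    have hs0 : s ≠ 0 := by omega
    obtain ⟨a, m, ha1, hqm, hsm⟩ : ∃ a m, 1 ≤ a ∧ ¬ q ∣ m ∧ s = q ^ a * m := by
      refine ⟨s.factorization q, ordCompl[q] s,
        Nat.Prime.factorization_pos_of_dvd hq hs0 hqs,
        Nat.not_dvd_ordCompl hq hs0,
        (Nat.ordProj_mul_ordCompl_eq_self s q).symm⟩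
    have hm1 : m ≠ 1 := by
      intro h
      exact hnp ⟨q, a, hq, by rw [hsm, h, mul_one]⟩
    have hm0 : m ≠ 0 := by
      intro h; rw [h, mul_zero] at hsm; omega
    have hmem : q ^ a ∈ Finset.Ioo 0 s := by
      simp only [Finset.mem_Ioo]
      refine ⟨pow_pos hq.pos a, ?_⟩
      rw [hsm]
      exact (Nat.lt_mul_iff_one_lt_right (pow_pos hq.pos a)).2 (by omega)
    have : q ∣ s.choose (q ^ a) := hqg.trans (Finset.gcd_dvd hmem)
    rw [hsm] at this
    exact lucas_aux hq hqm a this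
end

section
/- Let p be a prime and s, n positive integers with n ≤ s. Define M(s,n) as the gcd of all multinomial coefficients C(s; λ_1,...,λ_n) over compositions (λ_1,...,λ_n) of s into n positive parts. Then the p-adic valuation of M(s,n) equals 0 if n ≤ digits_p(s), and equals ⌈(n - digits_p(s))/(p-1)⌉ if n > digits_p(s). -/
set_option linter.unusedSectionVars false
set_option linter.unusedVariables false

/-- `Msn s n` is the gcd of the multinomial coefficients `C(s; λ₁,…,λₙ)` over all
compositions `(λ₁,…,λₙ)` of `s` into `n` positive parts. -/
def Msn (s n : ℕ) : ℕ :=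
  (((Finset.Nat.antidiagonalTuple n s).filter (fun f => ∀ i, 0 < f i)).gcd
    (fun f => Nat.multinomial Finset.univ f))

namespace MsnAux


variable {p : ℕ} [hp : Fact p.Prime]

lemma digitSum_pos {m : ℕ} (hm : 0 < m) : 0 < digitSum p m := by
  have hne : Nat.digits p m ≠ [] := Nat.digits_ne_nil_iff_ne_zero.mpr hm.ne'
  have hlast := Nat.getLast_digit_ne_zero p hm.ne'
  have hmem := List.getLast_mem hne
  have := List.single_le_sum (fun x _ => Nat.zero_le x) _ hmem
  unfold digitSum
  omega

lemma digitSum_add_le (a b : ℕ) : digitSum p (a + b) ≤ digitSum p a + digitSum p b := by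
  have la := sub_one_mul_padicValNat_factorial (p := p) a
  have lb := sub_one_mul_padicValNat_factorial (p := p) b
  have lab := sub_one_mul_padicValNat_factorial (p := p) (a + b)
  have hda := Nat.digit_sum_le p a
  have hdb := Nat.digit_sum_le p b
  have hdab := Nat.digit_sum_le p (a + b)
  have hdvd : padicValNat p a.factorial + padicValNat p b.factorial ≤
      padicValNat p (a + b).factorial := by
    rw [← padicValNat_dvd_iff_le (Nat.factorial_ne_zero _), pow_add]
    exact dvd_trans (mul_dvd_mul pow_padicValNat_dvd pow_padicValNat_dvd)
      (Nat.factorial_mul_factorial_dvd_factorial_add a b)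
  have h1 : (p - 1) * (padicValNat p a.factorial + padicValNat p b.factorial) ≤
      (p - 1) * padicValNat p (a + b).factorial := Nat.mul_le_mul_left _ hdvd
  rw [Nat.mul_add, la, lb, lab] at h1
  unfold digitSum
  omega

lemma digitSum_list_sum_le (l : List ℕ) : digitSum p l.sum ≤ (l.map (digitSum p)).sum := by
  induction l with
  | nil => simp [digitSum]
  | cons a l ih =>
    simp only [List.sum_cons, List.map_cons]
    exact le_trans (digitSum_add_le a l.sum) (Nat.add_le_add_left ih _)

lemma digitSum_prime_pow (e : ℕ) : digitSum p (p ^ e) = 1 := by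
  unfold digitSum
  have h1 : p ^ e = p ^ e * 1 := (mul_one _).symm
  rw [h1, Nat.digits_base_pow_mul hp.out.one_lt one_pos,
    Nat.digits_def' hp.out.one_lt one_pos,
    Nat.mod_eq_of_lt hp.out.one_lt, Nat.div_eq_of_lt hp.out.one_lt]
  simp

lemma padicValNat_prod {ι : Type*} (t : Finset ι) (g : ι → ℕ) (hg : ∀ i ∈ t, g i ≠ 0) :
    padicValNat p (∏ i ∈ t, g i) = ∑ i ∈ t, padicValNat p (g i) := by
  classical
  induction t using Finset.induction with
  | empty => simp
  | @insert a t' h ih =>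
    rw [Finset.prod_insert h, Finset.sum_insert h,
      padicValNat.mul (hg a (Finset.mem_insert_self a t'))
        (Finset.prod_ne_zero_iff.mpr fun i hi => hg i (Finset.mem_insert_of_mem hi)),
      ih fun i hi => hg i (Finset.mem_insert_of_mem hi)]

lemma val_multinomial {n s : ℕ} (f : Fin n → ℕ) (hf : ∑ i, f i = s) :
    (p - 1) * padicValNat p (Nat.multinomial Finset.univ f) + digitSum p s
      = ∑ i, digitSum p (f i) := by
  have hspec := Nat.multinomial_spec Finset.univ f
  rw [hf] at hspec
  have hval : (∑ i, padicValNat p (f i).factorial)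
      + padicValNat p (Nat.multinomial Finset.univ f) = padicValNat p s.factorial := by
    rw [← padicValNat_prod Finset.univ (fun i => (f i).factorial)
        (fun i _ => Nat.factorial_ne_zero _),
      ← padicValNat.mul (Finset.prod_ne_zero_iff.mpr fun i _ => Nat.factorial_ne_zero _)
        (Nat.multinomial_pos Finset.univ f).ne', hspec]
  have hper : ∀ i : Fin n, (p - 1) * padicValNat p (f i).factorial + digitSum p (f i) = f i := by
    intro i
    have := sub_one_mul_padicValNat_factorial (p := p) (f i)
    have h2 := Nat.digit_sum_le p (f i)
    unfold digitSum
    omega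
  have hsumper : ∑ i, ((p - 1) * padicValNat p (f i).factorial + digitSum p (f i)) = s := by
    rw [Finset.sum_congr rfl fun i _ => hper i, hf]
  rw [Finset.sum_add_distrib, ← Finset.mul_sum] at hsumper
  have hmul := congrArg (fun x => (p - 1) * x) hval
  simp only [Nat.mul_add] at hmul
  have ls := sub_one_mul_padicValNat_factorial (p := p) s
  have hds := Nat.digit_sum_le p s
  unfold digitSum at *
  omega

def expList : List ℕ → List ℕ
  | [] => []
  | d :: ds => List.replicate d 0 ++ (expList ds).map (· + 1)

lemma expList_length (ds : List ℕ) : (expList ds).length = ds.sum := by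
  induction ds with
  | nil => simp [expList]
  | cons d ds ih => simp [expList, ih]

lemma expList_sum (p : ℕ) (ds : List ℕ) :
    ((expList ds).map (p ^ ·)).sum = Nat.ofDigits p ds := by
  induction ds with
  | nil => simp [expList, Nat.ofDigits]
  | cons d ds ih =>
    simp only [expList, List.map_append, List.sum_append, List.map_replicate, pow_zero,
      List.sum_replicate, smul_eq_mul, mul_one, List.map_map, Nat.ofDigits_cons, ← ih]
    congr 1
    · induction (expList ds) with
      | nil => simp
      | cons e l ih2 =>
        simp only [List.map_cons, List.sum_cons, List.map_map] at ih2 ⊢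
        rw [ih2, Function.comp_apply, Nat.mul_add, pow_succ, mul_comm (p ^ e) p]

lemma exists_pow_list (s t : ℕ) (h : digitSum p s + (p - 1) * t ≤ s) :
    ∃ l : List ℕ, (l.map (p ^ ·)).sum = s ∧ l.length = digitSum p s + (p - 1) * t := by
  induction t with
  | zero =>
    exact ⟨expList (Nat.digits p s), by rw [expList_sum, Nat.ofDigits_digits],
      by rw [expList_length]; simp [digitSum]⟩
  | succ t ih =>
    have hp2 := hp.out.two_le
    have hmul : (p - 1) * (t + 1) = (p - 1) * t + (p - 1) := by ring
    obtain ⟨l, hsum, hlen⟩ := ih (by omega)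
    have hlt : l.length < s := by omega
    have hex : ∃ e ∈ l, e ≠ 0 := by
      by_contra hno
      push_neg at hno
      have hall : ∀ x ∈ l.map (p ^ ·), x = 1 := by
        intro x hx
        obtain ⟨e, he, rfl⟩ := List.mem_map.mp hx
        rw [hno e he, pow_zero]
      have := List.sum_eq_card_nsmul _ 1 hall
      simp only [List.length_map, smul_eq_mul, mul_one] at this
      omega
    obtain ⟨e, hel, he0⟩ := hex
    refine ⟨List.replicate p (e - 1) ++ l.erase e, ?_, ?_⟩
    · have hperm := (List.perm_cons_erase hel).map (p ^ ·)
      have hps : p ^ e + ((l.erase e).map (p ^ ·)).sum = s := by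
        rw [← hsum, hperm.sum_eq]
        simp
      rw [List.map_append, List.sum_append, List.map_replicate, List.sum_replicate,
        smul_eq_mul]
      have : p * p ^ (e - 1) = p ^ e := by
        rw [← pow_succ']
        congr 1
        omega
      omega
    · rw [List.length_append, List.length_replicate, List.length_erase_of_mem hel]
      have : 1 ≤ l.length := List.length_pos_iff.mpr (List.ne_nil_of_mem hel)
      omega

lemma exists_tuple (n : ℕ) (hn : 0 < n) (l : List ℕ) (hlen : n ≤ l.length)
    (hpos : ∀ x ∈ l, 0 < x) :
    ∃ f : Fin n → ℕ, (∀ i, 0 < f i) ∧ (∑ i, f i = l.sum) ∧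
      (∑ i, digitSum p (f i)) ≤ (l.map (digitSum p)).sum := by
  induction n generalizing l with
  | zero => omega
  | succ n ih =>
    rcases Nat.eq_zero_or_pos n with rfl | hn'
    · refine ⟨fun _ => l.sum, fun _ => ?_, by simp, by simpa using digitSum_list_sum_le l⟩
      obtain ⟨x, hx⟩ := List.exists_mem_of_ne_nil l (by
        intro h; rw [h] at hlen; simp at hlen)
      show 0 < l.sum
      exact lt_of_lt_of_le (hpos x hx) (List.single_le_sum (fun y _ => Nat.zero_le y) _ hx)
    · cases l with
      | nil => simp at hlen
      | cons a l' =>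
        obtain ⟨f', h1, h2, h3⟩ := ih hn' l'
          (by simpa using Nat.succ_le_succ_iff.mp (by simpa using hlen))
          (fun x hx => hpos x (List.mem_cons_of_mem _ hx))
        refine ⟨Fin.cons a f', ?_, ?_, ?_⟩
        · intro i
          refine Fin.cases ?_ ?_ i
          · simpa using hpos a List.mem_cons_self
          · intro j; simpa using h1 j
        · rw [Fin.sum_univ_succ]
          simp [h2]
        · rw [Fin.sum_univ_succ]
          simpa using Nat.add_le_add_left h3 (digitSum p a)



lemma ceil_aux (a b : ℕ) (ha : 0 < a) (hb : 0 < b) :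
    a ≤ b * ((a - 1) / b + 1) ∧ b * ((a - 1) / b + 1) < a + b ∧
      ∀ t, a ≤ b * t → (a - 1) / b + 1 ≤ t := by
  have hdm := Nat.div_add_mod (a - 1) b
  have hr : (a - 1) % b < b := Nat.mod_lt _ hb
  have hmul : b * ((a - 1) / b + 1) = b * ((a - 1) / b) + b := by ring
  refine ⟨by omega, by omega, ?_⟩
  intro t ht
  have h1 : b * ((a - 1) / b) < b * t := by omega
  have := Nat.lt_of_mul_lt_mul_left h1
  omega

lemma digitSum_modEq (p s : ℕ) [hp : Fact p.Prime] (hds : digitSum p s ≤ s) :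
    ∃ t0, s = digitSum p s + (p - 1) * t0 := by
  have hp2 := hp.out.two_le
  have hmod : digitSum p s ≡ s [MOD p - 1] := by
    rcases eq_or_lt_of_le hp2 with h2 | h3
    · have h1 : p - 1 = 1 := by omega
      rw [h1]; exact Nat.modEq_one
    · refine (Nat.modEq_digits_sum (p - 1) p ?_ s).symm
      have hadd := Nat.add_mod_left (p - 1) 1
      have hpe : p - 1 + 1 = p := by omega
      rw [hpe] at hadd
      rw [hadd]
      exact Nat.one_mod_eq_one.mpr (by omega)
  obtain ⟨t0, ht⟩ := (Nat.modEq_iff_dvd' hds).mp hmod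
  exact ⟨t0, by omega⟩

lemma Msn_val (p s n : ℕ) [hp : Fact p.Prime] (hs : 0 < s) (hn : 0 < n) (hns : n ≤ s)
    (k : ℕ) (hk1 : n ≤ digitSum p s + (p - 1) * k)
    (hkmin : ∀ t, n ≤ digitSum p s + (p - 1) * t → k ≤ t) :
    padicValNat p (Msn s n) = k := by
  have hp2 := hp.out.two_le
  have hds : digitSum p s ≤ s := Nat.digit_sum_le p s
  obtain ⟨t0, ht0⟩ := digitSum_modEq p s hds
  have hkt0 : k ≤ t0 := hkmin t0 (by omega)
  have hmulle : (p - 1) * k ≤ (p - 1) * t0 := Nat.mul_le_mul_left _ hkt0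
  have hMs : digitSum p s + (p - 1) * k ≤ s := by omega
  -- construct the witness tuple
  obtain ⟨l, hlsum, hllen⟩ := exists_pow_list (p := p) s k hMs
  have hpllen : (l.map (p ^ ·)).length = digitSum p s + (p - 1) * k := by
    rw [List.length_map]; omega
  have hplpos : ∀ x ∈ l.map (p ^ ·), 0 < x := by
    intro x hx
    obtain ⟨e, he, rfl⟩ := List.mem_map.mp hx
    exact pow_pos (by omega) e
  have hplD : ((l.map (p ^ ·)).map (digitSum p)).sum = digitSum p s + (p - 1) * k := by
    have heq : (l.map (p ^ ·)).map (digitSum p)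
        = List.replicate (digitSum p s + (p - 1) * k) 1 := by
      apply List.eq_replicate_iff.mpr
      refine ⟨by rw [List.length_map, hpllen], ?_⟩
      intro x hx
      obtain ⟨y, hy, rfl⟩ := List.mem_map.mp hx
      obtain ⟨e, he, rfl⟩ := List.mem_map.mp hy
      exact digitSum_prime_pow e
    rw [heq]; simp
  obtain ⟨f, hfpos, hfsum, hfD⟩ := exists_tuple (p := p) n hn (l.map (p ^ ·))
    (by omega) hplpos
  rw [hlsum] at hfsum
  rw [hplD] at hfD
  have hfmem : f ∈ (Finset.Nat.antidiagonalTuple n s).filter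
      (fun f : Fin n → ℕ => ∀ i, 0 < f i) := by
    rw [Finset.mem_filter, Finset.Nat.mem_antidiagonalTuple]
    exact ⟨hfsum, hfpos⟩
  have hGdvd : Msn s n ∣ Nat.multinomial Finset.univ f := Finset.gcd_dvd hfmem
  have hG0 : Msn s n ≠ 0 := by
    intro h0
    rw [h0] at hGdvd
    exact (Nat.multinomial_pos Finset.univ f).ne' (Nat.eq_zero_of_zero_dvd hGdvd)
  have hvf : padicValNat p (Nat.multinomial Finset.univ f) ≤ k := by
    have hv := val_multinomial (p := p) f hfsum
    have hle : (p - 1) * padicValNat p (Nat.multinomial Finset.univ f) ≤ (p - 1) * k := by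
      omega
    exact Nat.le_of_mul_le_mul_left hle (by omega)
  have hupper : padicValNat p (Msn s n) ≤ k := by
    refine le_trans ?_ hvf
    rw [← padicValNat_dvd_iff_le (Nat.multinomial_pos Finset.univ f).ne']
    exact dvd_trans pow_padicValNat_dvd hGdvd
  have hlower : k ≤ padicValNat p (Msn s n) := by
    rw [← padicValNat_dvd_iff_le hG0]
    refine Finset.dvd_gcd ?_
    intro g hg
    rw [Finset.mem_filter, Finset.Nat.mem_antidiagonalTuple] at hg
    obtain ⟨hgsum, hgpos⟩ := hg
    rw [padicValNat_dvd_iff_le (Nat.multinomial_pos Finset.univ g).ne']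
    have hv := val_multinomial (p := p) g hgsum
    have hDn : n ≤ ∑ i, digitSum p (g i) := by
      calc n = ∑ _i : Fin n, 1 := by simp
      _ ≤ ∑ i, digitSum p (g i) :=
        Finset.sum_le_sum (fun i _ => digitSum_pos (p := p) (hgpos i))
    exact hkmin _ (by omega)
  exact le_antisymm hupper hlower

end MsnAux


open MsnAux in
/-- The `p`-adic valuation of `M(s,n)` is `0` if `n ≤ digits_p(s)` and
`⌈(n - digits_p(s))/(p-1)⌉` if `n > digits_p(s)`. -/
theorem padicValNat_Msn (p s n : ℕ) (hp : Nat.Prime p) (hs : 0 < s) (hn : 0 < n)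
    (hns : n ≤ s) :
    (padicValNat p (Msn s n) : ℤ) =
      if n ≤ digitSum p s then 0
      else ⌈((n : ℚ) - (digitSum p s : ℚ)) / ((p : ℚ) - 1)⌉ := by
  haveI : Fact p.Prime := ⟨hp⟩
  have hp2 : 2 ≤ p := hp.two_le
  split_ifs with h
  · rw [Msn_val p s n hs hn hns 0 (by omega) (fun t _ => Nat.zero_le t)]
    simp
  · obtain ⟨hA, hB, hC⟩ := ceil_aux (n - digitSum p s) (p - 1) (by omega) (by omega)
    generalize (n - digitSum p s - 1) / (p - 1) + 1 = k at hA hB hC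
    have hveq : padicValNat p (Msn s n) = k :=
      Msn_val p s n hs hn hns k (by omega) (fun t ht => hC t (by omega))
    rw [hveq]
    symm
    rw [Int.ceil_eq_iff]
    have hb : (0 : ℚ) < (p : ℚ) - 1 := by
      have h2 : (2 : ℚ) ≤ (p : ℚ) := by exact_mod_cast hp2
      linarith
    have hc1 : ((n : ℚ) - (digitSum p s : ℚ)) ≤ ((p : ℚ) - 1) * (k : ℚ) := by
      have h1 : ((n - digitSum p s : ℕ) : ℚ) ≤ (((p - 1) * k : ℕ) : ℚ) := by
        exact_mod_cast hA
      push_cast [Nat.cast_sub (by omega : 1 ≤ p), Nat.cast_sub (by omega : digitSum p s ≤ n)]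
        at h1
      linarith
    have hc2 : ((p : ℚ) - 1) * (k : ℚ) < ((n : ℚ) - (digitSum p s : ℚ)) + ((p : ℚ) - 1) := by
      have h1 : (((p - 1) * k : ℕ) : ℚ) < ((n - digitSum p s + (p - 1) : ℕ) : ℚ) := by
        exact_mod_cast hB
      push_cast [Nat.cast_sub (by omega : 1 ≤ p), Nat.cast_sub (by omega : digitSum p s ≤ n)]
        at h1
      linarith
    constructor
    · rw [lt_div_iff₀ hb]
      push_cast
      linarith
    · rw [div_le_iff₀ hb]
      push_cast
      linarith
end

section
/- Let p be a prime, s a positive integer with base-p expansion s = s_k p^k + ... + s_1 p + s_0. The multinomial coefficient associated to the composition of s consisting of s_k copies of p^k, ..., s_0 copies of p^0 (a composition into digits_p(s) parts) is prime to p. -/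
/-- The multinomial coefficient `s!/(λ₁!⋯λₙ!)` associated to a list `l = [λ₁,…,λₙ]`. -/
def listMultinomial (l : List ℕ) : ℕ :=
  Nat.factorial l.sum / (l.map Nat.factorial).prod

/-- The composition of `s` consisting of `s_i` copies of `p^i` for each base-`p` digit `s_i`
of `s`. -/
def digitComposition (p s : ℕ) : List ℕ :=
  ((Nat.digits p s).zipIdx.map (fun ic => List.replicate ic.1 (p ^ ic.2))).flatten

lemma aux_prod_fact_dvd (l : List ℕ) : (l.map Nat.factorial).prod ∣ (l.sum).factorial := by
  induction l with
  | nil => simp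
  | cons a t ih =>
    simp only [List.map_cons, List.prod_cons, List.sum_cons]
    exact (mul_dvd_mul_left (Nat.factorial a) ih).trans
      (Nat.factorial_mul_factorial_dvd_factorial_add a t.sum)

lemma aux_digitSum_pow (p : ℕ) (hp : 1 < p) (i : ℕ) : (Nat.digits p (p ^ i)).sum = 1 := by
  have : p ^ i = p ^ i * 1 := by ring
  rw [this, Nat.digits_base_pow_mul hp one_pos]
  have h1 : Nat.digits p 1 = [1] := Nat.digits_def' hp one_pos |>.trans (by
    simp [Nat.mod_eq_of_lt hp, Nat.div_eq_of_lt hp])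
  simp [h1]

lemma aux_sum_enumFrom (p : ℕ) (d : List ℕ) (n : ℕ) :
    (((d.zipIdx n).map (fun ic => List.replicate ic.1 (p ^ ic.2))).flatten).sum
      = p ^ n * Nat.ofDigits p d := by
  induction d generalizing n with
  | nil => simp [Nat.ofDigits_nil]
  | cons a t ih =>
    simp only [List.zipIdx_cons, List.map_cons, List.flatten_cons, List.sum_append,
      List.sum_replicate, smul_eq_mul, ih, Nat.ofDigits_cons, pow_succ]
    ring

lemma aux_len_enumFrom (p : ℕ) (d : List ℕ) (n : ℕ) :
    (((d.zipIdx n).map (fun ic => List.replicate ic.1 (p ^ ic.2))).flatten).length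
      = d.sum := by
  induction d generalizing n with
  | nil => simp
  | cons a t ih => simp [List.zipIdx_cons, ih]

lemma aux_mem (p s x : ℕ) (hx : x ∈ digitComposition p s) : ∃ i, x = p ^ i := by
  simp only [digitComposition, List.mem_flatten, List.mem_map] at hx
  obtain ⟨L, ⟨⟨c, i⟩, _, rfl⟩, hxL⟩ := hx
  exact ⟨i, (List.eq_of_mem_replicate hxL)⟩

lemma aux_val_prod (p : ℕ) [hp : Fact p.Prime] (l : List ℕ)
    (hl : ∀ x ∈ l, ∃ i, x = p ^ i) :
    (p - 1) * padicValNat p ((l.map Nat.factorial).prod) = l.sum - l.length := by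
  have hp1 : 1 < p := hp.out.one_lt
  induction l with
  | nil => simp
  | cons a t ih =>
    have ha : ∃ i, a = p ^ i := hl a List.mem_cons_self
    have ht := ih (fun x hx => hl x (List.mem_cons_of_mem a hx))
    have hprod_pos : 0 < (t.map Nat.factorial).prod := by
      apply List.prod_pos; intro x hx
      simp only [List.mem_map] at hx
      obtain ⟨y, _, rfl⟩ := hx
      exact Nat.factorial_pos y
    simp only [List.map_cons, List.prod_cons, List.sum_cons, List.length_cons]
    rw [padicValNat.mul (Nat.factorial_ne_zero a) hprod_pos.ne', Nat.mul_add,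
      sub_one_mul_padicValNat_factorial, ht]
    obtain ⟨i, rfl⟩ := ha
    rw [aux_digitSum_pow p hp1 i]
    have h1 : 1 ≤ p ^ i := Nat.one_le_pow _ _ (by omega)
    have h2 : t.length ≤ t.sum := by
      have : ∀ x ∈ t, 1 ≤ x := by
        intro x hx
        obtain ⟨j, rfl⟩ := hl x (List.mem_cons_of_mem _ hx)
        exact Nat.one_le_pow _ _ (by omega)
      calc t.length = (List.replicate t.length 1).sum := by simp
        _ ≤ t.sum := by
          calc (List.replicate t.length 1).sum = (t.map (fun _ => 1)).sum := by
                rw [List.map_const']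
            _ ≤ (t.map id).sum := List.sum_le_sum (fun x hx => this x hx)
            _ = t.sum := by simp
    omega

/-- The composition of `s` given by its base-`p` expansion (with `s_i` copies of `p^i`) is a
composition of `s` into `digits_p(s)` parts, and its multinomial coefficient is prime to `p`. -/
theorem digitComposition_multinomial_coprime (p s : ℕ) (hp : Nat.Prime p) (hs : 0 < s) :
    (digitComposition p s).length = digitSum p s ∧
    (digitComposition p s).sum = s ∧
    (∀ x ∈ digitComposition p s, 0 < x) ∧
    Nat.Coprime (listMultinomial (digitComposition p s)) p := by
  haveI : Fact p.Prime := ⟨hp⟩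
  have hp1 : 1 < p := hp.one_lt
  set l := digitComposition p s with hl
  have hlen : l.length = digitSum p s := by
    rw [hl, digitComposition, aux_len_enumFrom, digitSum]
  have hsum : l.sum = s := by
    rw [hl, digitComposition, aux_sum_enumFrom, pow_zero, one_mul,
      Nat.ofDigits_digits]
  have hmem : ∀ x ∈ l, ∃ i, x = p ^ i := fun x hx => aux_mem p s x hx
  have hpos : ∀ x ∈ l, 0 < x := by
    intro x hx
    obtain ⟨i, rfl⟩ := hmem x hx
    exact Nat.pow_pos (by omega)
  refine ⟨hlen, hsum, hpos, ?_⟩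
  -- multinomial valuation
  have hdvd : (l.map Nat.factorial).prod ∣ (l.sum).factorial := aux_prod_fact_dvd l
  have hprod_pos : 0 < (l.map Nat.factorial).prod := by
    apply List.prod_pos; intro x hx
    simp only [List.mem_map] at hx
    obtain ⟨y, _, rfl⟩ := hx
    exact Nat.factorial_pos y
  have hM : listMultinomial l * (l.map Nat.factorial).prod = (l.sum).factorial :=
    Nat.div_mul_cancel hdvd
  have hMpos : 0 < listMultinomial l := by
    rcases Nat.eq_zero_or_pos (listMultinomial l) with h | h
    · rw [h, zero_mul] at hM
      exact absurd hM.symm (Nat.factorial_ne_zero _)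
    · exact h
  have hval : padicValNat p (listMultinomial l) + padicValNat p ((l.map Nat.factorial).prod)
      = padicValNat p ((l.sum).factorial) := by
    rw [← padicValNat.mul hMpos.ne' hprod_pos.ne', hM]
  have h1 : (p - 1) * padicValNat p ((l.sum).factorial) = l.sum - digitSum p l.sum := by
    rw [sub_one_mul_padicValNat_factorial]; rfl
  have h2 : (p - 1) * padicValNat p ((l.map Nat.factorial).prod) = l.sum - l.length :=
    aux_val_prod p l hmem
  have h3 : digitSum p l.sum = l.length := by rw [hsum, ← hlen]
  have h4 : (p - 1) * padicValNat p ((l.sum).factorial)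
      = (p - 1) * padicValNat p ((l.map Nat.factorial).prod) := by
    rw [h1, h2, h3]
  have h5 : padicValNat p ((l.sum).factorial) = padicValNat p ((l.map Nat.factorial).prod) :=
    Nat.eq_of_mul_eq_mul_left (by omega) h4
  have h6 : padicValNat p (listMultinomial l) = 0 := by omega
  rw [padicValNat.eq_zero_iff] at h6
  rcases h6 with h | h | h
  · omega
  · omega
  · exact (hp.coprime_iff_not_dvd.mpr h).symm
end

section
/- If λ is a positive integer that is not a power of a prime p, then there exist positive integers k, ℓ with k + ℓ = λ such that the binomial coefficient C(λ, k) is prime to p. -/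
/-- If `λ` is a positive integer which is not a power of the prime `p`, then `λ = k + ℓ` for
some positive integers `k, ℓ` such that the binomial coefficient `C(λ,k)` is prime to `p`. -/
theorem exists_choose_coprime (p lam : ℕ) (hp : Nat.Prime p) (hlam : 0 < lam)
    (h : ∀ r : ℕ, lam ≠ p ^ r) :
    ∃ k ℓ : ℕ, 0 < k ∧ 0 < ℓ ∧ k + ℓ = lam ∧ Nat.Coprime (lam.choose k) p := by
  set v := lam.factorization p with hv
  set m := lam / p ^ v with hm
  have hpm : ¬ p ∣ m := Nat.not_dvd_ordCompl hp hlam.ne'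
  have hlameq : p ^ v * m = lam := Nat.ordProj_mul_ordCompl_eq_self lam p
  have hm0 : m ≠ 0 := by intro h0; rw [h0, Nat.mul_zero] at hlameq; omega
  have hm1 : m ≠ 1 := by intro h0; rw [h0, Nat.mul_one] at hlameq; exact h v hlameq.symm
  have hm2 : 2 ≤ m := Nat.two_le_iff m |>.mpr ⟨hm0, hm1⟩
  have hppos : 0 < p := hp.pos
  have hkle : p ^ v ≤ lam := Nat.le_of_dvd hlam (Nat.ordProj_dvd lam p)
  refine ⟨p ^ v, lam - p ^ v, Nat.pow_pos (n := v) hppos, ?_, by omega, ?_⟩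
  · have : p ^ v * 2 ≤ p ^ v * m := Nat.mul_le_mul_left _ hm2
    omega
  rw [Nat.coprime_comm, hp.coprime_iff_not_dvd]
  rw [← emultiplicity_eq_zero]
  rw [hp.emultiplicity_choose hkle (Nat.lt_succ_self (Nat.log p lam))]
  norm_cast
  rw [Finset.card_eq_zero, Finset.filter_eq_empty_iff]
  intro i hi
  simp only [Finset.mem_Ico] at hi
  have hi1 : 1 ≤ i := hi.1
  have hsub : lam - p ^ v = p ^ v * (m - 1) := by
    rw [Nat.mul_sub_one]; omega
  rw [hsub, not_le]
  rcases le_or_gt i v with hiv | hiv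
  · have h1 : p ^ i ∣ p ^ v := pow_dvd_pow p hiv
    have h2 : p ^ v % p ^ i = 0 := Nat.eq_zero_of_dvd_of_lt h1 |> fun _ => Nat.mod_eq_zero_of_dvd h1
    have h3 : p ^ v * (m - 1) % p ^ i = 0 :=
      Nat.mod_eq_zero_of_dvd (h1.mul_right _)
    rw [h2, h3]
    exact Nat.pow_pos (n := i) hppos
  · obtain ⟨j, rfl⟩ : ∃ j, i = v + j := ⟨i - v, by omega⟩
    have hj1 : 1 ≤ j := by omega
    have hpj : (1 : ℕ) < p ^ j := Nat.one_lt_pow (by omega) hp.one_lt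
    -- m % p^j ≥ 1
    have hmr : 1 ≤ m % p ^ j := by
      rcases Nat.eq_zero_or_pos (m % p ^ j) with h0 | h0
      · exfalso
        exact hpm ((dvd_pow_self p (by omega : j ≠ 0)).trans
          (Nat.dvd_of_mod_eq_zero h0))
      · exact h0
    have hrlt : m % p ^ j < p ^ j := Nat.mod_lt _ (by omega)
    -- (m-1) % p^j = m % p^j - 1
    have hm1mod : (m - 1) % p ^ j = m % p ^ j - 1 := by
      conv_lhs => rw [show m - 1 = p ^ j * (m / p ^ j) + (m % p ^ j - 1) by
        have := Nat.div_add_mod m (p ^ j); omega]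
      rw [Nat.mul_add_mod, Nat.mod_eq_of_lt (by omega)]
    have hpv : p ^ v % p ^ (v + j) = p ^ v :=
      Nat.mod_eq_of_lt (Nat.pow_lt_pow_right hp.one_lt (by omega))
    rw [hpv, pow_add, Nat.mul_mod_mul_left, hm1mod]
    have h2 : 1 ≤ p ^ v := Nat.one_le_pow _ _ hppos
    have he : p ^ v * (m % p ^ j - 1) = p ^ v * (m % p ^ j) - p ^ v := by
      rw [Nat.mul_sub, Nat.mul_one]
    have hx : p ^ v * (m % p ^ j) < p ^ v * p ^ j :=
      (mul_lt_mul_iff_right₀ (show 0 < p ^ v from Nat.pow_pos (n := v) hppos)).mpr hrlt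
    have hy : p ^ v ≤ p ^ v * (m % p ^ j) := Nat.le_mul_of_pos_right _ hmr
    omega
end

section
/- Let p be a prime and s a positive integer. Define f(0) = digits_p(s) and for n with digits_p(s) + n(p-1) < s, if s admits a decomposition into digits_p(s)+n(p-1) powers of p then it admits one into digits_p(s)+(n+1)(p-1) powers of p. Consequently, for every m in the set {n : n ≡ s mod (p-1), digits_p(s) ≤ n ≤ s}, s admits a decomposition as a sum of m powers of p. -/
/-- `s` admits a decomposition as a sum of `m` powers of `p`: a multiset of `m` exponents
whose associated powers of `p` sum to `s`. -/
def HasDecomposition (p s m : ℕ) : Prop :=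
  ∃ l : Multiset ℕ, Multiset.card l = m ∧ (l.map (fun r => p ^ r)).sum = s

/-- Turn a digits list into a multiset of exponents. -/
def digitMultiset : List ℕ → Multiset ℕ
  | [] => 0
  | d :: ds => Multiset.replicate d 0 + (digitMultiset ds).map (· + 1)

lemma digitMultiset_card (L : List ℕ) : Multiset.card (digitMultiset L) = L.sum := by
  induction L with
  | nil => rfl
  | cons d ds ih => simp [digitMultiset, ih]

lemma digitMultiset_sum (p : ℕ) (L : List ℕ) :
    ((digitMultiset L).map (fun r => p ^ r)).sum = Nat.ofDigits p L := by
  induction L with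
  | nil => simp [digitMultiset]
  | cons d ds ih =>
    simp only [digitMultiset, Multiset.map_add, Multiset.sum_add, Multiset.map_map,
      Nat.ofDigits_cons]
    rw [Multiset.map_replicate]
    simp only [pow_zero, Multiset.sum_replicate, smul_eq_mul, mul_one]
    have : ((digitMultiset ds).map fun x => p ^ (x + 1)).sum
        = p * ((digitMultiset ds).map fun r => p ^ r).sum := by
      rw [Multiset.sum_map_mul_left.symm]
      congr 1
      ext x
      ring
    simp only [Function.comp] at *
    rw [this, ih]

lemma hasDecomposition_digitSum (p s : ℕ) (hp : 2 ≤ p) :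
    HasDecomposition p s (digitSum p s) := by
  refine ⟨digitMultiset (Nat.digits p s), digitMultiset_card _, ?_⟩
  rw [digitMultiset_sum, Nat.ofDigits_digits]

lemma step_lemma (p s m : ℕ) (hp : 2 ≤ p) (hm : m < s) (h : HasDecomposition p s m) :
    HasDecomposition p s (m + (p - 1)) := by
  obtain ⟨l, hc, hsum⟩ := h
  have hex : ∃ r ∈ l, r ≠ 0 := by
    by_contra hcon
    push_neg at hcon
    have : l = Multiset.replicate m 0 := by
      rw [Multiset.eq_replicate]
      exact ⟨hc, fun b hb => hcon b hb⟩
    rw [this] at hsum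
    simp at hsum
    omega
  obtain ⟨r, hrl, hr0⟩ := hex
  cases r with
  | zero => exact absurd rfl hr0
  | succ k =>
    have hcons : l = (k + 1) ::ₘ l.erase (k + 1) := (Multiset.cons_erase hrl).symm
    refine ⟨Multiset.replicate p k + l.erase (k + 1), ?_, ?_⟩
    · have hce : Multiset.card (l.erase (k + 1)) = m - 1 := by
        rw [Multiset.card_erase_of_mem hrl, hc]
        rfl
      have hm1 : 1 ≤ m := by
        have := Multiset.card_pos_iff_exists_mem.mpr ⟨_, hrl⟩
        omega
      simp [hce]
      omega
    · rw [hcons] at hsum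
      simp only [Multiset.map_cons, Multiset.sum_cons, Multiset.map_add, Multiset.sum_add,
        Multiset.map_replicate, Multiset.sum_replicate, smul_eq_mul] at *
      rw [← hsum]
      ring

/-- If `digits_p(s) + n(p-1) < s` and `s` decomposes into `digits_p(s) + n(p-1)` powers of
`p`, then it decomposes into `digits_p(s) + (n+1)(p-1)` powers of `p`.  Consequently, for
every `m` with `m ≡ s (mod p-1)` and `digits_p(s) ≤ m ≤ s`, `s` decomposes as a sum of `m`
powers of `p`. -/
theorem decomposition_steps (p s : ℕ) (hp : Nat.Prime p) (hs : 0 < s) :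
    (∀ n : ℕ, digitSum p s + n * (p - 1) < s →
        HasDecomposition p s (digitSum p s + n * (p - 1)) →
        HasDecomposition p s (digitSum p s + (n + 1) * (p - 1))) ∧
    (∀ m : ℕ, m ≡ s [MOD p - 1] → digitSum p s ≤ m → m ≤ s → HasDecomposition p s m) := by
  have hp2 : 2 ≤ p := hp.two_le
  constructor
  · intro n hlt h
    have := step_lemma p s _ hp2 hlt h
    have heq : digitSum p s + n * (p - 1) + (p - 1) = digitSum p s + (n + 1) * (p - 1) := by
      ring
    rwa [heq] at this
  · intro m hmod hge hle
    -- digitSum ≡ s mod (p-1)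
    have hds : digitSum p s ≡ s [MOD p - 1] := by
      rcases eq_or_lt_of_le hp2 with h2 | h3
    -- p = 2 case: mod 1 trivial
      · subst h2
        simp [Nat.ModEq, Nat.mod_one]
      · refine (Nat.modEq_digits_sum (p - 1) p ?_ s).symm
        have hq : p - 1 + 1 = p := by omega
        nth_rewrite 1 [← hq]
        rw [Nat.add_mod_left, Nat.mod_eq_of_lt (by omega)]
    have hmd : m ≡ digitSum p s [MOD p - 1] := hmod.trans hds.symm
    have hdvd : (p - 1) ∣ m - digitSum p s := (Nat.modEq_iff_dvd' hge).mp hmd.symm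
    obtain ⟨n, hn⟩ := hdvd
    have hm : m = digitSum p s + (p - 1) * n := by
      rw [← hn]
      exact (Nat.add_sub_cancel' hge).symm
    rw [mul_comm] at hm
    subst hm
    clear hmod hmd hn hge
    induction n with
    | zero => simpa using hasDecomposition_digitSum p s hp2
    | succ k ih =>
      have hkk : digitSum p s + k * (p - 1) + (p - 1) = digitSum p s + (k + 1) * (p - 1) := by
        ring
      have hk : digitSum p s + k * (p - 1) < s := by omega
      have := step_lemma p s _ hp2 hk (ih hk.le)
      have heq : digitSum p s + k * (p - 1) + (p - 1) = digitSum p s + (k + 1) * (p - 1) := by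
        ring
      rwa [heq] at this
end

section
/- Let p be a prime, s a positive integer, and d an integer with digits_p(s) ≤ d < s and d ≡ s (mod p-1). Then there is a composition of s into d+1 positive parts whose multinomial coefficient has p-adic valuation exactly ⌈(d+1-digits_p(s))/(p-1)⌉, and no composition of s into d+1 parts has smaller p-adic valuation of its multinomial coefficient. -/
lemma prod_factorial_dvd_factorial_sum (l : List ℕ) :
    (l.map Nat.factorial).prod ∣ Nat.factorial l.sum := by
  induction l with
  | nil => simp
  | cons a l ih =>
    simp only [List.map_cons, List.prod_cons, List.sum_cons]
    exact (mul_dvd_mul_left (Nat.factorial a) ih).trans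
      (Nat.factorial_mul_factorial_dvd_factorial_add a l.sum)

lemma prod_factorial_ne_zero (l : List ℕ) : (l.map Nat.factorial).prod ≠ 0 := by
  induction l with
  | nil => simp
  | cons a l ih => simp [Nat.factorial_ne_zero, ih]

lemma listMultinomial_spec (l : List ℕ) :
    (l.map Nat.factorial).prod * listMultinomial l = Nat.factorial l.sum := by
  rw [listMultinomial]
  exact Nat.mul_div_cancel' (prod_factorial_dvd_factorial_sum l)

lemma legendre_int (p : ℕ) [hp : Fact p.Prime] (n : ℕ) :
    ((p : ℤ) - 1) * padicValNat p (Nat.factorial n) = (n : ℤ) - digitSum p n := by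
  have h := sub_one_mul_padicValNat_factorial (p := p) n
  have h2 : (Nat.digits p n).sum ≤ n := Nat.digit_sum_le p n
  have hp1 : 1 ≤ p := hp.out.one_lt.le
  zify [h2, hp1] at h
  simpa [digitSum] using h

lemma padicVal_prod_factorial (p : ℕ) [hp : Fact p.Prime] (l : List ℕ) :
    ((p : ℤ) - 1) * padicValNat p ((l.map Nat.factorial).prod) =
      (l.sum : ℤ) - ((l.map (digitSum p)).sum : ℤ) := by
  induction l with
  | nil => simp
  | cons a l ih =>
    have h1 : Nat.factorial a ≠ 0 := Nat.factorial_ne_zero a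
    have h2 : (l.map Nat.factorial).prod ≠ 0 := prod_factorial_ne_zero l
    simp only [List.map_cons, List.prod_cons, List.sum_cons]
    rw [padicValNat.mul h1 h2]
    have h3 := legendre_int p a
    push_cast
    push_cast at ih h3
    linarith [ih, h3]

lemma listMultinomial_padicVal (p : ℕ) [hp : Fact p.Prime] (l : List ℕ) :
    ((p : ℤ) - 1) * padicValNat p (listMultinomial l) =
      ((l.map (digitSum p)).sum : ℤ) - (digitSum p l.sum : ℤ) := by
  have hspec := listMultinomial_spec l
  have h2 : (l.map Nat.factorial).prod ≠ 0 := prod_factorial_ne_zero l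
  have h3 : listMultinomial l ≠ 0 := by
    intro h
    rw [h, mul_zero] at hspec
    exact Nat.factorial_ne_zero _ hspec.symm
  have h4 : padicValNat p (Nat.factorial l.sum) =
      padicValNat p ((l.map Nat.factorial).prod) + padicValNat p (listMultinomial l) := by
    rw [← hspec, padicValNat.mul h2 h3]
  have h5 := legendre_int p l.sum
  have h6 := padicVal_prod_factorial p l
  have h4' : (padicValNat p (Nat.factorial l.sum) : ℤ) =
      (padicValNat p ((l.map Nat.factorial).prod) : ℤ) +
      (padicValNat p (listMultinomial l) : ℤ) := by exact_mod_cast h4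
  have h7 : ((p : ℤ) - 1) * (padicValNat p (Nat.factorial l.sum) : ℤ) =
      ((p : ℤ) - 1) * (padicValNat p ((l.map Nat.factorial).prod) : ℤ) +
      ((p : ℤ) - 1) * (padicValNat p (listMultinomial l) : ℤ) := by rw [h4', mul_add]
  linarith [h5, h6, h7]

lemma digitSum_mul_pow (p : ℕ) (hp : 1 < p) (c : ℕ) (hc0 : 0 < c) (hcp : c < p) :
    ∀ i, digitSum p (c * p ^ i) = c := by
  intro i
  induction i with
  | zero =>
    simp only [pow_zero, mul_one, digitSum]
    rw [Nat.digits_def' hp hc0, Nat.mod_eq_of_lt hcp, Nat.div_eq_of_lt hcp]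
    simp
  | succ i ih =>
    have hre : c * p ^ (i + 1) = c * p ^ i * p := by ring
    have hpos : 0 < c * p ^ i * p := by positivity
    rw [digitSum, hre, Nat.digits_def' hp hpos, Nat.mul_mod_left,
      Nat.mul_div_cancel _ (by omega : 0 < p)]
    simpa [digitSum] using ih

lemma ofDigits_eq_zero_of_sum_eq_zero (p : ℕ) :
    ∀ L : List ℕ, L.sum = 0 → Nat.ofDigits p L = 0 := by
  intro L
  induction L with
  | nil => simp
  | cons a t ih =>
    intro h
    simp only [List.sum_cons] at h
    rw [Nat.ofDigits_cons, ih (by omega)]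
    omega

lemma digitSum_pos (p n : ℕ) (hn : 0 < n) : 0 < digitSum p n := by
  by_contra h
  push_neg at h
  have h0 : (Nat.digits p n).sum = 0 := by simpa [digitSum] using h
  have := ofDigits_eq_zero_of_sum_eq_zero p (Nat.digits p n) h0
  rw [Nat.ofDigits_digits] at this
  omega

lemma digitSum_modEq (p n : ℕ) (hp : 2 ≤ p) : digitSum p n ≡ n [MOD p - 1] := by
  rcases eq_or_lt_of_le hp with h | h
  · have : p - 1 = 1 := by omega
    rw [this]
    exact Nat.modEq_one
  · have h1 : p % (p - 1) = 1 := by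
      rw [Nat.mod_eq_sub_mod (by omega : p - 1 ≤ p)]
      have h2 : p - (p - 1) = 1 := by omega
      rw [h2, Nat.mod_eq_of_lt (by omega)]
    exact (Nat.modEq_digits_sum (p - 1) p h1 n).symm

lemma length_le_sum_of_pos : ∀ l : List ℕ, (∀ x ∈ l, 0 < x) → l.length ≤ l.sum := by
  intro l
  induction l with
  | nil => simp
  | cons a t ih =>
    intro h
    have ha := h a (by simp)
    have := ih fun x hx => h x (by simp [hx])
    simp only [List.length_cons, List.sum_cons]
    omega

lemma exists_two_le_of_length_lt_sum (l : List ℕ) (h : l.length < l.sum) :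
    ∃ x ∈ l, 2 ≤ x := by
  by_contra hc
  push_neg at hc
  have := List.sum_le_card_nsmul l 1 fun x hx => by
    have := hc x hx; omega
  simp only [smul_eq_mul, mul_one] at this
  omega

def powList (p : ℕ) : List ℕ → ℕ → List ℕ
  | [], _ => []
  | c :: ds, i => List.replicate c (p ^ i) ++ powList p ds (i + 1)

lemma powList_length (p : ℕ) : ∀ ds i, (powList p ds i).length = ds.sum := by
  intro ds
  induction ds with
  | nil => intro i; simp [powList]
  | cons c ds ih => intro i; simp [powList, ih]

lemma powList_sum (p : ℕ) : ∀ ds i, (powList p ds i).sum = p ^ i * Nat.ofDigits p ds := by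
  intro ds
  induction ds with
  | nil => intro i; simp [powList, Nat.ofDigits]
  | cons c ds ih =>
    intro i
    simp only [powList, List.sum_append, List.sum_replicate, smul_eq_mul, ih,
      Nat.ofDigits_cons]
    ring

lemma powList_mem (p : ℕ) : ∀ ds i x, x ∈ powList p ds i → ∃ j, x = p ^ j := by
  intro ds
  induction ds with
  | nil => intro i x hx; simp [powList] at hx
  | cons c ds ih =>
    intro i x hx
    simp only [powList, List.mem_append, List.mem_replicate] at hx
    rcases hx with ⟨-, rfl⟩ | hx
    · exact ⟨i, rfl⟩
    · exact ih (i + 1) x hx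

lemma exists_pow_list (p : ℕ) (hp : 1 < p) (m : ℕ) :
    ∀ t, digitSum p m + t * (p - 1) ≤ m →
    ∃ l : List ℕ, l.length = digitSum p m + t * (p - 1) ∧
      (∀ x ∈ l, ∃ j, x = p ^ j) ∧ l.sum = m := by
  intro t
  induction t with
  | zero =>
    intro _
    refine ⟨powList p (Nat.digits p m) 0, ?_, ?_, ?_⟩
    · simp [powList_length, digitSum]
    · exact fun x hx => powList_mem p _ 0 x hx
    · simp [powList_sum, Nat.ofDigits_digits]
  | succ t ih =>
    intro hle
    have hsm : (t + 1) * (p - 1) = t * (p - 1) + (p - 1) := by ring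
    obtain ⟨l, hlen, hpow, hsum⟩ := ih (by omega)
    have hlt : l.length < l.sum := by omega
    obtain ⟨x, hxl, hx2⟩ := exists_two_le_of_length_lt_sum l hlt
    obtain ⟨j, rfl⟩ := hpow x hxl
    cases j with
    | zero => simp at hx2
    | succ j =>
      obtain ⟨l₁, l₂, rfl⟩ := List.append_of_mem hxl
      refine ⟨l₁ ++ (List.replicate p (p ^ j) ++ l₂), ?_, ?_, ?_⟩
      · have h1 : (l₁ ++ (List.replicate p (p ^ j) ++ l₂)).length =
            l₁.length + (p + l₂.length) := by simp
        have h2 : (l₁ ++ p ^ (j + 1) :: l₂).length = l₁.length + (1 + l₂.length) := by simp; try omega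
        omega
      · intro x hx
        simp only [List.mem_append, List.mem_replicate] at hx
        rcases hx with hx | ⟨-, rfl⟩ | hx
        · exact hpow x (by simp [hx])
        · exact ⟨j, rfl⟩
        · exact hpow x (by simp [hx])
      · have h1 : (l₁ ++ (List.replicate p (p ^ j) ++ l₂)).sum =
            l₁.sum + (p * p ^ j + l₂.sum) := by simp
        have h2 : (l₁ ++ p ^ (j + 1) :: l₂).sum = l₁.sum + (p ^ (j + 1) + l₂.sum) := by simp; try omega
        have h3 : p ^ (j + 1) = p * p ^ j := by ring
        omega

lemma sum_digitSum_eq_length (p : ℕ) (hp : 1 < p) :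
    ∀ l : List ℕ, (∀ x ∈ l, ∃ j, x = p ^ j) → (l.map (digitSum p)).sum = l.length := by
  intro l
  induction l with
  | nil => simp
  | cons a t ih =>
    intro h
    obtain ⟨j, rfl⟩ := h a List.mem_cons_self
    have hd : digitSum p (p ^ j) = 1 := by
      have := digitSum_mul_pow p hp 1 one_pos hp j
      simpa using this
    simp only [List.map_cons, List.sum_cons, List.length_cons, hd,
      ih fun x hx => h x (by simp [hx])]
    omega

/-- For `digits_p(s) ≤ d < s` with `d ≡ s (mod p-1)`, there is a composition of `s` into
`d+1` positive parts whose multinomial coefficient has `p`-adic valuation exactly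
`⌈(d+1-digits_p(s))/(p-1)⌉`, and no composition of `s` into `d+1` positive parts has a
multinomial coefficient of smaller `p`-adic valuation. -/
theorem exists_composition_min_valuation (p s d : ℕ) (hp : Nat.Prime p) (hs : 0 < s)
    (hd : digitSum p s ≤ d) (hds : d < s) (hmod : d ≡ s [MOD p - 1]) :
    (∃ l : List ℕ, l.length = d + 1 ∧ (∀ x ∈ l, 0 < x) ∧ l.sum = s ∧
      (padicValNat p (listMultinomial l) : ℤ) =
        ⌈((d : ℚ) + 1 - (digitSum p s : ℚ)) / ((p : ℚ) - 1)⌉) ∧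
    (∀ l : List ℕ, l.length = d + 1 → (∀ x ∈ l, 0 < x) → l.sum = s →
      ⌈((d : ℚ) + 1 - (digitSum p s : ℚ)) / ((p : ℚ) - 1)⌉ ≤
        (padicValNat p (listMultinomial l) : ℤ)) := by
  haveI : Fact p.Prime := ⟨hp⟩
  have hp2 : 2 ≤ p := hp.two_le
  have hp1 : 1 < p := hp.one_lt
  set k := digitSum p s with hk
  have hp2Q : (2 : ℚ) ≤ (p : ℚ) := by exact_mod_cast hp2
  have hpQ : (0 : ℚ) < (p : ℚ) - 1 := by linarith
  have hks : k ≡ s [MOD p - 1] := digitSum_modEq p s hp2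
  have hdk : k ≡ d [MOD p - 1] := (hmod.trans hks.symm).symm
  have hdvd : (p - 1) ∣ d - k := (Nat.modEq_iff_dvd' hd).mp hdk
  obtain ⟨t, ht⟩ := hdvd
  have hcm : (p - 1) * t = t * (p - 1) := mul_comm _ _
  have htd : d = k + t * (p - 1) := by omega
  constructor
  · -- existence
    obtain ⟨l, hlen, hpow, hsum⟩ := exists_pow_list p hp1 s t (by omega)
    have hlen' : l.length = d := by omega
    obtain ⟨x, hxl, hx2⟩ := exists_two_le_of_length_lt_sum l (by omega)
    obtain ⟨j, rfl⟩ := hpow x hxl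
    cases j with
    | zero => simp at hx2
    | succ j =>
      obtain ⟨l₁, l₂, rfl⟩ := List.append_of_mem hxl
      set L : List ℕ := l₁ ++ p ^ j :: (p - 1) * p ^ j :: l₂ with hL
      have hppos : 0 < p ^ j := pow_pos (by omega) j
      have hLlen : L.length = d + 1 := by
        have h2 : (l₁ ++ p ^ (j + 1) :: l₂).length = l₁.length + (1 + l₂.length) := by simp; try omega
        have h1 : L.length = l₁.length + (2 + l₂.length) := by simp [hL]; try omega
        omega
      have hLpos : ∀ x ∈ L, 0 < x := by
        intro x hx
        simp only [hL, List.mem_append, List.mem_cons] at hx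
        rcases hx with hx | rfl | rfl | hx
        · obtain ⟨i, rfl⟩ := hpow x (by simp [hx]); exact pow_pos (by omega) i
        · exact hppos
        · exact Nat.mul_pos (by omega) hppos
        · obtain ⟨i, rfl⟩ := hpow x (by simp [hx]); exact pow_pos (by omega) i
      have hLsum : L.sum = s := by
        have h1 : L.sum = l₁.sum + (p ^ j + ((p - 1) * p ^ j + l₂.sum)) := by simp [hL]
        have h2 : (l₁ ++ p ^ (j + 1) :: l₂).sum = l₁.sum + (p ^ (j + 1) + l₂.sum) := by simp; try omega
        have h3 : p ^ (j + 1) = p * p ^ j := by ring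
        have h4 : (p - 1) * p ^ j = p * p ^ j - p ^ j := by
          rw [Nat.sub_mul, one_mul]
        have h5 : p ^ j ≤ p * p ^ j := Nat.le_mul_of_pos_left _ (by omega)
        omega
      have hT : (L.map (digitSum p)).sum = d + p - 1 := by
        have hd1 : digitSum p (p ^ j) = 1 := by
          simpa using digitSum_mul_pow p hp1 1 one_pos hp1 j
        have hd2 : digitSum p ((p - 1) * p ^ j) = p - 1 :=
          digitSum_mul_pow p hp1 (p - 1) (by omega) (by omega) j
        have h1 : (L.map (digitSum p)).sum =
            (l₁.map (digitSum p)).sum + (1 + ((p - 1) + (l₂.map (digitSum p)).sum)) := by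
          simp [hL, hd1, hd2]
        have h2 : (l₁.map (digitSum p)).sum = l₁.length :=
          sum_digitSum_eq_length p hp1 l₁ fun x hx => hpow x (by simp [hx])
        have h3 : (l₂.map (digitSum p)).sum = l₂.length :=
          sum_digitSum_eq_length p hp1 l₂ fun x hx => hpow x (by simp [hx])
        have h4 : (l₁ ++ p ^ (j + 1) :: l₂).length = l₁.length + (1 + l₂.length) := by simp; try omega
        omega
      have hval := listMultinomial_padicVal p L
      rw [hLsum, hT, ← hk] at hval
      have hvv : (padicValNat p (listMultinomial L) : ℤ) = t + 1 := by
        have hne : ((p : ℤ) - 1) ≠ 0 := by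
          have : (2 : ℤ) ≤ (p : ℤ) := by exact_mod_cast hp2
          omega
        apply mul_left_cancel₀ hne
        rw [hval]
        have h1 : ((d + p - 1 : ℕ) : ℤ) = (d : ℤ) + (p : ℤ) - 1 := by
          have : d + p - 1 = d + (p - 1) := by omega
          rw [this]; push_cast [Nat.cast_sub (by omega : 1 ≤ p)]; ring
        have h2 : (d : ℤ) = (k : ℤ) + (t : ℤ) * ((p : ℤ) - 1) := by
          rw [htd]; push_cast [Nat.cast_sub (by omega : 1 ≤ p)]; ring
        rw [h1, h2]; ring
      refine ⟨L, hLlen, hLpos, hLsum, ?_⟩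
      rw [hvv]
      symm
      rw [Int.ceil_eq_iff]
      constructor
      · rw [lt_div_iff₀ hpQ]
        have h2 : (d : ℚ) = (k : ℚ) + (t : ℚ) * ((p : ℚ) - 1) := by
          rw [htd]; push_cast [Nat.cast_sub (by omega : 1 ≤ p)]; ring
        push_cast
        rw [h2]; ring_nf; linarith
      · rw [div_le_iff₀ hpQ]
        have h2 : (d : ℚ) = (k : ℚ) + (t : ℚ) * ((p : ℚ) - 1) := by
          rw [htd]; push_cast [Nat.cast_sub (by omega : 1 ≤ p)]; ring
        push_cast
        rw [h2]; ring_nf; linarith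
  · -- lower bound
    intro l hl hpos hsuml
    rw [Int.ceil_le]
    rw [div_le_iff₀ hpQ]
    have hT1 : d + 1 ≤ (l.map (digitSum p)).sum := by
      have h0 := length_le_sum_of_pos (l.map (digitSum p)) (by
        intro x hx
        simp only [List.mem_map] at hx
        obtain ⟨y, hy, rfl⟩ := hx
        exact digitSum_pos p y (hpos y hy))
      simpa [hl] using h0
    have hval := listMultinomial_padicVal p l
    rw [hsuml, ← hk] at hval
    have key : ((d : ℤ) + 1) - (k : ℤ) ≤
        ((p : ℤ) - 1) * (padicValNat p (listMultinomial l) : ℤ) := by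
      have hT1' : ((d : ℤ) + 1) ≤ ((l.map (digitSum p)).sum : ℤ) := by exact_mod_cast hT1
      linarith [hval]
    have keyQ := (@Int.cast_le ℚ _ _ _).mpr key
    push_cast at keyQ
    push_cast
    linarith [keyQ]
end

section
/- Let s ≥ 2 be an integer that is not a prime power. Then the gcd over all pairs (k, s-k) with 0 < k < s of the binomial coefficients C(s,k) equals 1; equivalently, for every prime p, some C(s,k) with 0 < k < s is prime to p. -/
open Nat Finset

/-- If `p^(log p s)` divides `s - k` and `0 < k < s`, then there are no carries when adding
`k` and `s - k` in base `p`, so `p` does not divide `C(s,k)`. -/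
lemma not_dvd_choose_of_pow_log_dvd {s p k : ℕ} (hp : p.Prime) (hks : k < s)
    (hdvd : p ^ Nat.log p s ∣ (s - k)) : ¬ p ∣ s.choose k := by
  set m := Nat.log p s with hm
  rw [← emultiplicity_eq_zero,
    Nat.Prime.emultiplicity_choose hp hks.le (show Nat.log p s < m + 1 by omega)]
  have hempty : Finset.filter (fun i => p ^ i ≤ k % p ^ i + (s - k) % p ^ i)
      (Finset.Ico 1 (m + 1)) = ∅ := by
    rw [Finset.filter_eq_empty_iff]
    intro i hi
    simp only [Finset.mem_Ico] at hi
    have hpi : 0 < p ^ i := pow_pos hp.pos i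
    have hi' : p ^ i ∣ (s - k) := dvd_trans (pow_dvd_pow p (by omega)) hdvd
    have h0 : (s - k) % p ^ i = 0 := Nat.mod_eq_zero_of_dvd hi'
    have h1 : k % p ^ i < p ^ i := Nat.mod_lt _ hpi
    omega
  rw [hempty]
  simp

/-- If `s ≥ 2` is not a prime power, then the gcd of the binomial coefficients `C(s,k)` for
`0 < k < s` equals `1`; equivalently, for every prime `p` some `C(s,k)` with `0 < k < s` is
prime to `p`. -/
theorem gcd_choose_eq_one (s : ℕ) (hs : 2 ≤ s)
    (h : ¬ ∃ q r : ℕ, Nat.Prime q ∧ 1 ≤ r ∧ s = q ^ r) :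
    Finset.gcd (Finset.Ioo 0 s) (fun k => s.choose k) = 1 ∧
    ∀ p : ℕ, Nat.Prime p → ∃ k : ℕ, 0 < k ∧ k < s ∧ Nat.Coprime (s.choose k) p := by
  have key : ∀ p : ℕ, Nat.Prime p → ∃ k : ℕ, 0 < k ∧ k < s ∧ Nat.Coprime (s.choose k) p := by
    intro p hp
    set m := Nat.log p s with hm
    have hpm0 : 0 < p ^ m := pow_pos hp.pos m
    have hpm : p ^ m ≤ s := Nat.pow_log_le_self p (by omega)
    by_cases hmod : s % p ^ m = 0
    · -- `s` is a multiple of `p^m`; take `k = p^m`.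
      have hd : p ^ m ∣ s := Nat.dvd_of_mod_eq_zero hmod
      have hne : s ≠ p ^ m := by
        intro hEq
        have hm1 : 1 ≤ m := by
          rcases Nat.eq_zero_or_pos m with h0 | h1
          · rw [h0] at hEq; simp at hEq; omega
          · exact h1
        exact h ⟨p, m, hp, hm1, hEq⟩
      have hlt : p ^ m < s := lt_of_le_of_ne hpm (Ne.symm hne)
      refine ⟨p ^ m, hpm0, hlt, ?_⟩
      have hnd := not_dvd_choose_of_pow_log_dvd hp hlt (Nat.dvd_sub hd dvd_rfl)
      exact Nat.coprime_comm.mp (hp.coprime_iff_not_dvd.mpr hnd)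
    · -- take `k = s % p^m`.
      have hks : s % p ^ m < s := lt_of_lt_of_le (Nat.mod_lt _ hpm0) hpm
      refine ⟨s % p ^ m, Nat.pos_of_ne_zero hmod, hks, ?_⟩
      have hdvd : p ^ m ∣ s - s % p ^ m := by
        have h1 : p ^ m * (s / p ^ m) + s % p ^ m = s := Nat.div_add_mod s (p ^ m)
        have h2 : s - s % p ^ m = p ^ m * (s / p ^ m) := by omega
        exact h2 ▸ Dvd.intro _ rfl
      have hnd := not_dvd_choose_of_pow_log_dvd hp hks hdvd
      exact Nat.coprime_comm.mp (hp.coprime_iff_not_dvd.mpr hnd)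
  refine ⟨?_, key⟩
  by_contra hg
  obtain ⟨p, hp, hpd⟩ := Nat.exists_prime_and_dvd hg
  obtain ⟨k, hk0, hks, hcop⟩ := key p hp
  have hdvd : p ∣ s.choose k :=
    hpd.trans (Finset.gcd_dvd (Finset.mem_Ioo.mpr ⟨hk0, hks⟩))
  exact hp.one_lt.ne' (Nat.eq_one_of_dvd_coprimes hcop.symm dvd_rfl hdvd)
end

section
/- Let R be a commutative ring and s ≥ 2 an integer. If s is not a prime power, then the cokernel of the map ⊕_{0<k<s} Γ^k(R) ⊗ Γ^{s-k}(R) → Γ^s(R) induced by the divided-power (shuffle) multiplication is zero; if s = p^r for a prime p, this cokernel is isomorphic to R/pR. -/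
open TensorProduct PiTensorProduct

/-- The action of a permutation `σ` on the `n`-th tensor power of `M`. -/
noncomputable def permMap (R : Type*) [CommRing R] (M : Type*) [AddCommGroup M] [Module R M]
    {n : ℕ} (σ : Equiv.Perm (Fin n)) :
    (⨂[R] _ : Fin n, M) ≃ₗ[R] ⨂[R] _ : Fin n, M :=
  PiTensorProduct.reindex R (fun _ => M) σ

/-- `Γ^n(M)`: the divided power functor, i.e. the submodule of symmetric tensors in the
`n`-th tensor power of `M`. -/
noncomputable def GammaSub (R : Type*) [CommRing R] (M : Type*) [AddCommGroup M] [Module R M]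
    (n : ℕ) : Submodule R (⨂[R] _ : Fin n, M) :=
  ⨅ σ : Equiv.Perm (Fin n),
    LinearMap.ker ((permMap R M σ).toLinearMap - LinearMap.id)

/-- The set of `(a,b)`-shuffles in the symmetric group on `a + b` letters. -/
def shuffles (a b : ℕ) : Finset (Equiv.Perm (Fin (a + b))) :=
  Finset.univ.filter (fun σ =>
    (∀ i j : Fin a, i < j → σ (Fin.castAdd b i) < σ (Fin.castAdd b j)) ∧
    (∀ i j : Fin b, i < j → σ (Fin.natAdd a i) < σ (Fin.natAdd a j)))

/-- The shuffle multiplication `(⊗^a M) ⊗ (⊗^b M) → ⊗^(a+b) M`: the sum of all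
`(a,b)`-shuffles acting on tensor powers. -/
noncomputable def shuffleMul (R : Type*) [CommRing R] (M : Type*) [AddCommGroup M]
    [Module R M] (a b : ℕ) :
    ((⨂[R] _ : Fin a, M) ⊗[R] (⨂[R] _ : Fin b, M)) →ₗ[R] ⨂[R] _ : Fin (a + b), M :=
  ∑ σ ∈ shuffles a b,
    ((permMap R M σ).toLinearMap ∘ₗ
      ((PiTensorProduct.reindex R (fun _ => M) finSumFinEquiv).toLinearMap ∘ₗ
        (PiTensorProduct.tmulEquiv R M).toLinearMap))

/-- The divided power multiplication `⊗^k(R) → ⊗^{s-k}(R) → ⊗^s(R)` (for `k ≤ s`), as a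
bilinear map. -/
noncomputable def mulInto (R : Type*) [CommRing R] (s k : ℕ) (hk : k ≤ s) :
    (⨂[R] _ : Fin k, R) →ₗ[R] (⨂[R] _ : Fin (s - k), R) →ₗ[R] ⨂[R] _ : Fin s, R :=
  TensorProduct.curry
    ((PiTensorProduct.reindex R (fun _ => R)
        (finCongr (by omega : k + (s - k) = s))).toLinearMap ∘ₗ shuffleMul R R k (s - k))

/-- The image in `⊗^s(R)` of `⊕_{0<k<s} Γ^k(R) ⊗ Γ^{s-k}(R)` under the divided power
multiplication. -/
noncomputable def divMulImage (R : Type*) [CommRing R] (s : ℕ) :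
    Submodule R (⨂[R] _ : Fin s, R) :=
  ⨆ k : Fin (s + 1), ⨆ _ : 0 < k.val ∧ k.val < s,
    Submodule.map₂ (mulInto R s k.val (Nat.lt_succ_iff.mp k.isLt))
      (GammaSub R R k.val) (GammaSub R R (s - k.val))

noncomputable instance (R : Type*) [CommRing R] (M : Type*) [AddCommGroup M] [Module R M]
    (n : ℕ) : AddCommGroup (⨂[R] _ : Fin n, M) :=
  PiTensorProduct.instAddCommGroup

/-- The cokernel of the map `⊕_{0<k<s} Γ^k(R) ⊗ Γ^{s-k}(R) → Γ^s(R)` induced by the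
divided power multiplication. -/
noncomputable def divMulCoker (R : Type*) [CommRing R] (s : ℕ) :=
  (GammaSub R R s) ⧸ ((divMulImage R s).comap (GammaSub R R s).subtype)

noncomputable instance (R : Type*) [CommRing R] (s : ℕ) : AddCommGroup (divMulCoker R s) :=
  inferInstanceAs (AddCommGroup
    ((GammaSub R R s) ⧸ ((divMulImage R s).comap (GammaSub R R s).subtype)))

noncomputable instance (R : Type*) [CommRing R] (s : ℕ) : Module R (divMulCoker R s) :=
  inferInstanceAs (Module R
    ((GammaSub R R s) ⧸ ((divMulImage R s).comap (GammaSub R R s).subtype)))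


section ShuffleCard
variable {a b : ℕ}

/-- The increasing permutation determined by a subset `S` of size `a`. -/
noncomputable def toShuffle (S : Finset (Fin (a+b))) (hS : S.card = a) (hSc : Sᶜ.card = b) :
    Equiv.Perm (Fin (a+b)) :=
  (finSumFinEquiv.symm.trans
    (Equiv.sumCongr (S.orderIsoOfFin hS).toEquiv ((Sᶜ).orderIsoOfFin hSc).toEquiv)).trans
    ((Equiv.sumCongr (Equiv.refl _)
      (Equiv.subtypeEquivRight (fun x => Finset.mem_compl))).trans
      (Equiv.sumCompl (· ∈ S)))

lemma toShuffle_castAdd (S : Finset (Fin (a+b))) (hS : S.card = a) (hSc : Sᶜ.card = b)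
    (i : Fin a) : toShuffle S hS hSc (Fin.castAdd b i) = (S.orderIsoOfFin hS i : Fin (a+b)) := by
  simp [toShuffle, finSumFinEquiv_symm_apply_castAdd]

lemma toShuffle_natAdd (S : Finset (Fin (a+b))) (hS : S.card = a) (hSc : Sᶜ.card = b)
    (j : Fin b) : toShuffle S hS hSc (Fin.natAdd a j) = ((Sᶜ).orderIsoOfFin hSc j : Fin (a+b)) := by
  simp [toShuffle, finSumFinEquiv_symm_apply_natAdd]

lemma shuffles_strictMono_cast {σ : Equiv.Perm (Fin (a+b))} (hσ : σ ∈ shuffles a b) :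
    StrictMono (fun i : Fin a => σ (Fin.castAdd b i)) := by
  have h := (Finset.mem_filter.mp hσ).2.1
  exact fun i j hij => h i j hij

lemma shuffles_strictMono_nat {σ : Equiv.Perm (Fin (a+b))} (hσ : σ ∈ shuffles a b) :
    StrictMono (fun j : Fin b => σ (Fin.natAdd a j)) := by
  have h := (Finset.mem_filter.mp hσ).2.2
  exact fun i j hij => h i j hij

lemma image_natAdd_compl (σ : Equiv.Perm (Fin (a+b))) :
    Finset.image (fun j : Fin b => σ (Fin.natAdd a j)) Finset.univ =
      (Finset.image (fun i : Fin a => σ (Fin.castAdd b i)) Finset.univ)ᶜ := by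
  ext x
  obtain ⟨y, rfl⟩ : ∃ y, σ y = x := ⟨σ.symm x, σ.apply_symm_apply x⟩
  simp only [Finset.mem_image, Finset.mem_compl, Finset.mem_univ, true_and,
    EmbeddingLike.apply_eq_iff_eq]
  constructor
  · rintro ⟨j, rfl⟩ ⟨i, hi⟩
    have := congrArg Fin.val hi
    simp only [Fin.natAdd, Fin.castAdd, Fin.castLE] at this
    have hi2 : i.val < a := i.isLt
    omega
  · intro h
    induction y using Fin.addCases with
    | left i => exact absurd ⟨i, rfl⟩ h
    | right j => exact ⟨j, rfl⟩

lemma toShuffle_mem (S : Finset (Fin (a+b))) (hS : S.card = a) (hSc : Sᶜ.card = b) :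
    toShuffle S hS hSc ∈ shuffles a b := by
  rw [shuffles, Finset.mem_filter]
  refine ⟨Finset.mem_univ _, fun i j hij => ?_, fun i j hij => ?_⟩
  · rw [toShuffle_castAdd, toShuffle_castAdd]
    exact Subtype.coe_lt_coe.mpr ((S.orderIsoOfFin hS).strictMono hij)
  · rw [toShuffle_natAdd, toShuffle_natAdd]
    exact Subtype.coe_lt_coe.mpr (((Sᶜ).orderIsoOfFin hSc).strictMono hij)

lemma toShuffle_image (S : Finset (Fin (a+b))) (hS : S.card = a) (hSc : Sᶜ.card = b) :
    Finset.image (fun i : Fin a => toShuffle S hS hSc (Fin.castAdd b i)) Finset.univ = S := by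
  ext x
  simp only [Finset.mem_image, Finset.mem_univ, true_and]
  constructor
  · rintro ⟨i, rfl⟩
    rw [toShuffle_castAdd]
    exact (S.orderIsoOfFin hS i).2
  · intro hx
    refine ⟨(S.orderIsoOfFin hS).symm ⟨x, hx⟩, ?_⟩
    rw [toShuffle_castAdd, OrderIso.apply_symm_apply]

lemma card_shuffles (a b : ℕ) : (shuffles a b).card = (a+b).choose a := by
  classical
  have key : (shuffles a b).card = (Finset.powersetCard a (Finset.univ : Finset (Fin (a+b)))).card := by
    refine Finset.card_bij
      (fun σ _ => Finset.image (fun i : Fin a => σ (Fin.castAdd b i)) Finset.univ)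
      (fun σ hσ => ?_) (fun σ hσ τ hτ h => ?_) (fun S hS => ?_)
    · rw [Finset.mem_powersetCard_univ,
        Finset.card_image_of_injective _ (shuffles_strictMono_cast hσ).injective,
        Finset.card_univ, Fintype.card_fin]
    · -- injectivity
      have h' : Finset.image (fun i : Fin a => σ (Fin.castAdd b i)) Finset.univ =
          Finset.image (fun i : Fin a => τ (Fin.castAdd b i)) Finset.univ := h
      have hccard : (Finset.image (fun i : Fin a => σ (Fin.castAdd b i)) Finset.univ).card = a := by
        rw [Finset.card_image_of_injective _ (shuffles_strictMono_cast hσ).injective,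
          Finset.card_univ, Fintype.card_fin]
      have h1 : (fun i : Fin a => σ (Fin.castAdd b i)) = ⇑(Finset.orderEmbOfFin _ hccard) :=
        Finset.orderEmbOfFin_unique hccard
          (fun i => Finset.mem_image_of_mem _ (Finset.mem_univ i))
          (shuffles_strictMono_cast hσ)
      have h2 : (fun i : Fin a => τ (Fin.castAdd b i)) = ⇑(Finset.orderEmbOfFin _ hccard) :=
        Finset.orderEmbOfFin_unique hccard
          (fun i => by rw [h']; exact Finset.mem_image_of_mem _ (Finset.mem_univ i))
          (shuffles_strictMono_cast hτ)
      have hcast : ∀ i : Fin a, σ (Fin.castAdd b i) = τ (Fin.castAdd b i) := by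
        intro i
        rw [congrFun h1 i, congrFun h2 i]
      have hnimg : Finset.image (fun j : Fin b => τ (Fin.natAdd a j)) Finset.univ =
          Finset.image (fun j : Fin b => σ (Fin.natAdd a j)) Finset.univ := by
        rw [image_natAdd_compl, image_natAdd_compl, h']
      have hncard : (Finset.image (fun j : Fin b => σ (Fin.natAdd a j)) Finset.univ).card = b := by
        rw [Finset.card_image_of_injective _ (shuffles_strictMono_nat hσ).injective,
          Finset.card_univ, Fintype.card_fin]
      have h3 : (fun j : Fin b => σ (Fin.natAdd a j)) = ⇑(Finset.orderEmbOfFin _ hncard) :=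
        Finset.orderEmbOfFin_unique hncard
          (fun j => Finset.mem_image_of_mem _ (Finset.mem_univ j))
          (shuffles_strictMono_nat hσ)
      have h4 : (fun j : Fin b => τ (Fin.natAdd a j)) = ⇑(Finset.orderEmbOfFin _ hncard) :=
        Finset.orderEmbOfFin_unique hncard
          (fun j => by rw [← hnimg]; exact Finset.mem_image_of_mem _ (Finset.mem_univ j))
          (shuffles_strictMono_nat hτ)
      have hnat : ∀ j : Fin b, σ (Fin.natAdd a j) = τ (Fin.natAdd a j) := by
        intro j
        rw [congrFun h3 j, congrFun h4 j]
      apply Equiv.ext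
      intro x
      induction x using Fin.addCases with
      | left i => exact hcast i
      | right j => exact hnat j
    · rw [Finset.mem_powersetCard_univ] at hS
      have hSc : Sᶜ.card = b := by
        rw [Finset.card_compl, hS, Fintype.card_fin]
        omega
      exact ⟨toShuffle S hS hSc, toShuffle_mem S hS hSc, toShuffle_image S hS hSc⟩
  rw [key, Finset.card_powersetCard, Finset.card_univ, Fintype.card_fin]

end ShuffleCard

section Aux

variable (R : Type*) [CommRing R]

lemma tprod_eq_smul_one (n : ℕ) (f : Fin n → R) :
    (tprod R f) = (∏ i, f i) • tprod R (fun _ : Fin n => (1:R)) := by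
  have h := MultilinearMap.map_smul_univ (tprod R (s := fun _ : Fin n => R))
    f (fun _ => (1:R))
  simpa using h

/-- The tensor power of the base ring is the base ring. -/
noncomputable def tpowEquiv (n : ℕ) : (⨂[R] _ : Fin n, R) ≃ₗ[R] R :=
  LinearEquiv.ofLinear (PiTensorProduct.lift (MultilinearMap.mkPiAlgebra R (Fin n) R))
    (LinearMap.toSpanSingleton R _ (tprod R (fun _ => 1)))
    (by ext; simp)
    (by
      ext f
      simp only [LinearMap.comp_apply, LinearMap.id_apply, LinearMap.compMultilinearMap_apply]
      rw [PiTensorProduct.lift.tprod]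
      simp [LinearMap.toSpanSingleton_apply])

@[simp] lemma tpowEquiv_tprod (n : ℕ) (f : Fin n → R) :
    tpowEquiv R n (tprod R f) = ∏ i, f i := by
  simp [tpowEquiv]

@[simp] lemma tpowEquiv_symm_apply (n : ℕ) (r : R) :
    (tpowEquiv R n).symm r = r • tprod R (fun _ : Fin n => (1:R)) := rfl

lemma permMap_eq_id {n : ℕ} (σ : Equiv.Perm (Fin n)) :
    (permMap R R σ).toLinearMap = LinearMap.id := by
  ext f
  simp only [LinearMap.compMultilinearMap_apply, LinearEquiv.coe_coe, LinearMap.id_apply,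
    permMap, reindex_tprod]

lemma gammaSub_eq_top (n : ℕ) : GammaSub R R n = ⊤ := by
  rw [GammaSub, eq_top_iff]
  refine le_iInf fun σ => ?_
  intro x _
  simp [LinearMap.mem_ker, LinearMap.sub_apply, permMap_eq_id]

lemma span_tprod_one_eq_top (n : ℕ) :
    Submodule.span R {tprod R (fun _ : Fin n => (1:R))} = ⊤ := by
  rw [eq_top_iff]
  intro x _
  have : x = tpowEquiv R n x • tprod R (fun _ : Fin n => (1:R)) := by
    have := (tpowEquiv R n).symm_apply_apply x
    rw [tpowEquiv_symm_apply] at this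
    exact this.symm
  rw [this]
  exact Submodule.smul_mem _ _ (Submodule.mem_span_singleton_self _)

lemma shuffleMul_tprod_one (a b : ℕ) :
    shuffleMul R R a b (tprod R (fun _ : Fin a => (1:R)) ⊗ₜ[R] tprod R (fun _ : Fin b => (1:R))) =
      (shuffles a b).card • tprod R (fun _ : Fin (a+b) => (1:R)) := by
  rw [shuffleMul, LinearMap.sum_apply]
  rw [Finset.sum_congr rfl (g := fun _ => tprod R (fun _ : Fin (a+b) => (1:R)))
    (fun σ _ => ?_), Finset.sum_const]
  simp only [LinearMap.comp_apply, LinearEquiv.coe_coe]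
  rw [PiTensorProduct.tmulEquiv_apply]
  have h1 : (PiTensorProduct.tprod R) (fun i : Fin a ⊕ Fin b => Sum.elim (fun _ : Fin a => (1:R))
      (fun _ : Fin b => (1:R)) i) = tprod R (fun _ : Fin a ⊕ Fin b => (1:R)) := by
    congr 1; funext i; cases i <;> rfl
  rw [h1, reindex_tprod]
  have h3 := congrFun (congrArg (fun g => g.toFun) (permMap_eq_id R σ))
    (tprod R (fun _ : Fin (a+b) => (1:R)))
  exact h3

lemma mulInto_tprod_one (s k : ℕ) (hk : k ≤ s) :
    mulInto R s k hk (tprod R (fun _ : Fin k => (1:R))) (tprod R (fun _ : Fin (s-k) => (1:R))) =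
      ((s.choose k : ℕ) : R) • tprod R (fun _ : Fin s => (1:R)) := by
  rw [mulInto]
  simp only [TensorProduct.curry_apply, LinearMap.comp_apply, LinearEquiv.coe_coe]
  rw [shuffleMul_tprod_one, map_nsmul, reindex_tprod]
  rw [card_shuffles, Nat.cast_smul_eq_nsmul]
  congr 1
  rw [Nat.add_sub_cancel' hk]

end Aux


section NumThy

lemma choose_pow_mul_modeq (q : ℕ) (hq : q.Prime) (m : ℕ) :
    ∀ a : ℕ, Nat.choose (q ^ a * m) (q ^ a) ≡ m [MOD q] := by
  haveI : Fact q.Prime := ⟨hq⟩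
  intro a
  induction a with
  | zero => simpa [Nat.choose_one_right] using Nat.ModEq.refl m
  | succ a ih =>
    have h := Choose.choose_modEq_choose_mod_mul_choose_div_nat
      (p := q) (n := q ^ (a+1) * m) (k := q ^ (a+1))
    have hdvd1 : q ∣ q ^ (a+1) * m :=
      Dvd.dvd.mul_right (dvd_pow_self q (Nat.succ_ne_zero a)) m
    have hdvd2 : q ∣ q ^ (a+1) := dvd_pow_self q (Nat.succ_ne_zero a)
    have hn : (q ^ (a+1) * m) % q = 0 := Nat.dvd_iff_mod_eq_zero.mp hdvd1
    have hk : (q ^ (a+1)) % q = 0 := Nat.dvd_iff_mod_eq_zero.mp hdvd2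
    have hn2 : (q ^ (a+1) * m) / q = q ^ a * m := by
      rw [pow_succ, mul_comm (q^a) q, mul_assoc, Nat.mul_div_cancel_left _ hq.pos]
    have hk2 : (q ^ (a+1)) / q = q ^ a := by
      rw [pow_succ, mul_comm, Nat.mul_div_cancel_left _ hq.pos]
    rw [hn, hk, hn2, hk2, Nat.choose_self, one_mul] at h
    exact h.trans ih

lemma prime_dvd_choose_pow (p : ℕ) (hp : p.Prime) :
    ∀ (r k : ℕ), 0 < k → k < p ^ r → p ∣ Nat.choose (p ^ r) k := by
  haveI : Fact p.Prime := ⟨hp⟩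
  intro r
  induction r with
  | zero => intro k h0 h1; rw [pow_zero] at h1; exact ((by omega : False)).elim
  | succ r ih =>
    intro k h0 h1
    have h := Choose.choose_modEq_choose_mod_mul_choose_div_nat
      (p := p) (n := p ^ (r+1)) (k := k)
    have hn : (p ^ (r+1)) % p = 0 :=
      Nat.dvd_iff_mod_eq_zero.mp (dvd_pow_self p (Nat.succ_ne_zero r))
    have hn2 : (p ^ (r+1)) / p = p ^ r := by
      rw [pow_succ, mul_comm, Nat.mul_div_cancel_left _ hp.pos]
    rw [hn, hn2] at h
    rcases Nat.eq_zero_or_pos (k % p) with hkp | hkp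
    · -- k = p * (k / p)
      have hkd : p ∣ k := Nat.dvd_iff_mod_eq_zero.mpr hkp
      have h0' : 0 < k / p := Nat.div_pos (Nat.le_of_dvd h0 hkd) hp.pos
      have h1' : k / p < p ^ r := by
        apply Nat.div_lt_of_lt_mul
        rw [mul_comm, ← pow_succ]
        exact h1
      have := ih (k / p) h0' h1'
      rw [hkp, Nat.choose_zero_right, one_mul] at h
      exact (Nat.modEq_zero_iff_dvd).mp (h.trans ((Nat.modEq_zero_iff_dvd).mpr this))
    · rw [Nat.choose_eq_zero_of_lt hkp, zero_mul] at h
      exact (Nat.modEq_zero_iff_dvd).mp h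

lemma choose_pred_pow_modeq (p : ℕ) (hp : p.Prime) :
    ∀ r : ℕ, 0 < r → Nat.choose (p ^ r - 1) (p ^ (r-1) - 1) ≡ 1 [MOD p] := by
  haveI : Fact p.Prime := ⟨hp⟩
  have hp2 : 2 ≤ p := hp.two_le
  intro r
  induction r with
  | zero => omega
  | succ r ih =>
    intro _
    rcases Nat.eq_zero_or_pos r with rfl | hr
    · simpa [Nat.choose_zero_right] using Nat.ModEq.refl 1
    have h := Choose.choose_modEq_choose_mod_mul_choose_div_nat
      (p := p) (n := p ^ (r+1) - 1) (k := p ^ r - 1)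
    have hpr : 1 ≤ p ^ r := Nat.one_le_pow _ _ hp.pos
    have hprs : 1 ≤ p ^ (r+1) := Nat.one_le_pow _ _ hp.pos
    have e1 : p ^ (r+1) - 1 = p * (p ^ r - 1) + (p - 1) := by
      have : p ^ (r+1) = p * p ^ r := by rw [pow_succ, mul_comm]
      rw [this]
      have h2 : p * (p ^ r - 1) = p * p ^ r - p := by rw [Nat.mul_sub, mul_one]
      have h3 : p ≤ p * p ^ r := Nat.le_mul_of_pos_right p hpr
      omega
    have e2 : p ^ r - 1 = p * (p ^ (r-1) - 1) + (p - 1) := by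
      have hx : p ^ r = p * p ^ (r-1) := by
        conv_lhs => rw [show r = (r-1)+1 by omega]
        rw [pow_succ, mul_comm]
      rw [hx, Nat.mul_sub]
      have hprr : 1 ≤ p ^ (r-1) := Nat.one_le_pow _ _ hp.pos
      have h3 : p ≤ p * p ^ (r-1) := Nat.le_mul_of_pos_right p hprr
      omega
    have hmod : (p ^ (r+1) - 1) % p = p - 1 := by
      rw [e1, Nat.mul_add_mod]
      exact Nat.mod_eq_of_lt (by omega)
    have hdiv : (p ^ (r+1) - 1) / p = p ^ r - 1 := by
      rw [e1, Nat.mul_add_div hp.pos]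
      rw [Nat.div_eq_of_lt (by omega), Nat.add_zero]
    have hmod2 : (p ^ r - 1) % p = p - 1 := by
      rw [e2, Nat.mul_add_mod]
      exact Nat.mod_eq_of_lt (by omega)
    have hdiv2 : (p ^ r - 1) / p = p ^ (r-1) - 1 := by
      rw [e2, Nat.mul_add_div hp.pos]
      rw [Nat.div_eq_of_lt (by omega), Nat.add_zero]
    rw [hmod, hdiv, hmod2, hdiv2, Nat.choose_self, one_mul] at h
    exact h.trans (ih hr)

lemma gcd_choose_eq_one_s17 (s : ℕ) (hs : 2 ≤ s) (h : ¬ ∃ p r : ℕ, Nat.Prime p ∧ s = p ^ r) :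
    (Finset.Ioo 0 s).gcd s.choose = 1 := by
  set d := (Finset.Ioo 0 s).gcd s.choose with hd
  have h1s : (1:ℕ) ∈ Finset.Ioo 0 s := Finset.mem_Ioo.mpr ⟨one_pos, by omega⟩
  have hds : d ∣ s := by
    have := Finset.gcd_dvd (f := s.choose) h1s
    rwa [Nat.choose_one_right] at this
  by_contra hd1
  obtain ⟨q, hq, hqd⟩ := Nat.exists_prime_and_dvd hd1
  have hqs : q ∣ s := hqd.trans hds
  have hs0 : s ≠ 0 := by omega
  obtain ⟨a, m, hsm, hqm, ha1⟩ : ∃ a m, q ^ a * m = s ∧ ¬ q ∣ m ∧ 0 < a :=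
    ⟨s.factorization q, s / q ^ s.factorization q,
      Nat.ordProj_mul_ordCompl_eq_self s q, Nat.not_dvd_ordCompl hq hs0,
      hq.factorization_pos_of_dvd hs0 hqs⟩
  have hm1 : m ≠ 1 := by
    intro hm1
    rw [hm1, mul_one] at hsm
    exact h ⟨q, a, hq, hsm.symm⟩
  have hm0 : m ≠ 0 := by
    intro h0
    rw [h0, mul_zero] at hsm
    omega
  have hqa1 : 1 ≤ q ^ a := Nat.one_le_pow _ _ hq.pos
  have hqa_lt : q ^ a < s := by
    rw [← hsm]
    exact (Nat.lt_mul_iff_one_lt_right (by omega)).mpr (by omega)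
  have hmem : q ^ a ∈ Finset.Ioo 0 s := Finset.mem_Ioo.mpr ⟨by omega, hqa_lt⟩
  have hdc : d ∣ s.choose (q ^ a) := Finset.gcd_dvd hmem
  have hqc : q ∣ s.choose (q ^ a) := hqd.trans hdc
  have hmod := choose_pow_mul_modeq q hq m a
  rw [hsm] at hmod
  have : q ∣ m := (Nat.modEq_zero_iff_dvd).mp
    (hmod.symm.trans ((Nat.modEq_zero_iff_dvd).mpr hqc))
  exact hqm this

lemma gcd_choose_eq_prime (p r : ℕ) (hp : Nat.Prime p) (hr : 0 < r) :
    (Finset.Ioo 0 (p ^ r)).gcd (p ^ r).choose = p := by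
  have hs2 : 2 ≤ p ^ r := by
    calc 2 = 2 ^ 1 := rfl
    _ ≤ p ^ r := Nat.pow_le_pow_left hp.two_le 1 |>.trans (Nat.pow_le_pow_right hp.pos hr)
  set s := p ^ r with hs_def
  set d := (Finset.Ioo 0 s).gcd s.choose with hd
  have hpd : p ∣ d := Finset.dvd_gcd fun k hk => by
    have hk' := Finset.mem_Ioo.mp hk
    exact prime_dvd_choose_pow p hp r k hk'.1 hk'.2
  have h1s : (1:ℕ) ∈ Finset.Ioo 0 s := Finset.mem_Ioo.mpr ⟨one_pos, by omega⟩
  have hds : d ∣ s := by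
    have := Finset.gcd_dvd (f := s.choose) h1s
    rwa [Nat.choose_one_right] at this
  set t := Nat.choose (p ^ r - 1) (p ^ (r-1) - 1) with ht
  have hpr1 : 1 ≤ p ^ r := Nat.one_le_pow _ _ hp.pos
  have hprr1 : 1 ≤ p ^ (r-1) := Nat.one_le_pow _ _ hp.pos
  have hkey : Nat.choose (p^r) (p^(r-1)) = p * t := by
    have h := Nat.add_one_mul_choose_eq (p^r - 1) (p^(r-1) - 1)
    have e1 : (p^r - 1) + 1 = p^r := by omega
    have e2 : (p^(r-1) - 1) + 1 = p^(r-1) := by omega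
    rw [e1, e2] at h
    have e3 : p ^ r = p ^ (r-1) * p := by
      conv_lhs => rw [show r = (r-1)+1 by omega]
      rw [pow_succ]
    have h' : Nat.choose (p^r) (p^(r-1)) * p^(r-1) = (p * t) * p^(r-1) := by
      rw [← ht] at h
      rw [← h, e3]; ring
    exact Nat.eq_of_mul_eq_mul_right (by omega) h'
  have hpt : ¬ p ∣ t := by
    intro hdvd
    have h1 := choose_pred_pow_modeq p hp r hr
    have h2 : (0:ℕ) ≡ 1 [MOD p] := (Nat.modEq_zero_iff_dvd.mpr hdvd).symm.trans h1
    have := h2.symm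
    unfold Nat.ModEq at this
    rw [Nat.one_mod_eq_one.mpr (by have := hp.two_le; omega), Nat.zero_mod] at this
    omega
  have hmem : p^(r-1) ∈ Finset.Ioo 0 s := Finset.mem_Ioo.mpr
    ⟨by omega, Nat.pow_lt_pow_right hp.one_lt (by omega)⟩
  have hdC : d ∣ p * t := by
    have h5 := Finset.gcd_dvd (f := s.choose) hmem
    rw [hs_def] at h5
    rwa [hkey] at h5
  obtain ⟨i, hir, hdi⟩ := (Nat.dvd_prime_pow hp).mp hds
  have hi1 : 1 ≤ i := by
    rcases Nat.eq_zero_or_pos i with h0 | h1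
    · rw [h0, pow_zero] at hdi
      rw [hdi] at hpd
      have := Nat.le_of_dvd one_pos hpd
      have := hp.two_le
      omega
    · exact h1
  have hi2 : i < 2 := by
    by_contra h2
    push_neg at h2
    have h4 : p * p ∣ d := by
      rw [hdi, ← pow_two]
      exact pow_dvd_pow p h2
    have hpp : p * p ∣ p * t := h4.trans hdC
    have : p ∣ t := (Nat.mul_dvd_mul_iff_left hp.pos).mp hpp
    exact hpt this
  have : i = 1 := by omega
  rw [hdi, this, pow_one]

end NumThy

section IdealAux
variable (R : Type*) [CommRing R]


lemma span_natCast_pair (a g : ℕ) :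
    Ideal.span {((Nat.gcd a g : ℕ) : R)} = Ideal.span {(a : R), (g : R)} := by
  apply le_antisymm
  · rw [Ideal.span_le, Set.singleton_subset_iff]
    have hZ : (Nat.gcd a g : ℤ) = (a : ℤ) * Int.gcdA a g + (g : ℤ) * Int.gcdB a g := by
      have := Int.gcd_eq_gcd_ab (a : ℤ) (g : ℤ)
      simpa using this
    have hR : ((Nat.gcd a g : ℕ) : R) =
        (a : R) * ((Int.gcdA a g : ℤ) : R) + (g : R) * ((Int.gcdB a g : ℤ) : R) := by
      have := congrArg (fun z : ℤ => ((z : ℤ) : R)) hZ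
      push_cast at this ⊢
      simpa using this
    exact Ideal.mem_span_pair.mpr ⟨((Int.gcdA a g : ℤ) : R), ((Int.gcdB a g : ℤ) : R), by
      rw [mul_comm (((Int.gcdA a g : ℤ) : R)) _, mul_comm (((Int.gcdB a g : ℤ) : R)) _]
      exact hR.symm⟩
  · rw [Ideal.span_le]
    rintro x (rfl | h)
    · exact Ideal.mem_span_singleton.mpr (Nat.cast_dvd_cast (Nat.gcd_dvd_left a g))
    · rw [Set.mem_singleton_iff] at h
      subst h
      exact Ideal.mem_span_singleton.mpr (Nat.cast_dvd_cast (Nat.gcd_dvd_right a g))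

lemma span_natCast_finset (T : Finset ℕ) :
    Ideal.span ((fun n : ℕ => (n : R)) '' (↑T : Set ℕ)) = Ideal.span {((T.gcd id : ℕ) : R)} := by
  classical
  induction T using Finset.induction_on with
  | empty =>
    simp only [Finset.coe_empty, Set.image_empty, Ideal.span_empty, Finset.gcd_empty,
      Nat.cast_zero]
    exact Ideal.span_zero.symm
  | @insert a T ha ih =>
    rw [Finset.coe_insert, Set.image_insert_eq, Ideal.span_insert, ih, Finset.gcd_insert]
    have h2 : (Ideal.span {(a:R), ((T.gcd id : ℕ) : R)}) =
        Ideal.span {(a:R)} ⊔ Ideal.span {((T.gcd id : ℕ) : R)} := by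
      rw [Ideal.span_insert]
    rw [← h2, ← span_natCast_pair]
    rfl

end IdealAux

section Coker

variable (R : Type*) [CommRing R]

lemma gammaSub_eq_span (n : ℕ) :
    GammaSub R R n = Submodule.span R {tprod R (fun _ : Fin n => (1:R))} := by
  rw [gammaSub_eq_top, span_tprod_one_eq_top]

lemma divMulImage_map_eq (s : ℕ) :
    Submodule.map (tpowEquiv R s).toLinearMap (divMulImage R s) =
      Ideal.span ((fun n : ℕ => (n : R)) '' (↑((Finset.Ioo 0 s).image s.choose) : Set ℕ)) := by
  have himg : ((fun n : ℕ => (n : R)) '' (↑((Finset.Ioo 0 s).image s.choose) : Set ℕ)) =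
      (fun k : ℕ => ((s.choose k : ℕ) : R)) '' {k : ℕ | 0 < k ∧ k < s} := by
    rw [Finset.coe_image, Set.image_image]
    congr 1
    ext k
    simp [Set.mem_Ioo]
  rw [himg, divMulImage, Submodule.map_iSup]
  have hstep : ∀ k : Fin (s+1),
      Submodule.map (tpowEquiv R s).toLinearMap
        (⨆ _ : 0 < k.val ∧ k.val < s,
          Submodule.map₂ (mulInto R s k.val (Nat.lt_succ_iff.mp k.isLt))
            (GammaSub R R k.val) (GammaSub R R (s - k.val))) =
      ⨆ _ : 0 < k.val ∧ k.val < s, Ideal.span {((s.choose k.val : ℕ) : R)} := by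
    intro k
    rw [Submodule.map_iSup]
    congr 1
    funext hk
    rw [gammaSub_eq_span, gammaSub_eq_span, Submodule.map₂_span_span,
      Set.image2_singleton, mulInto_tprod_one, Submodule.map_span, Set.image_singleton]
    congr 1
    congr 1
    rw [map_smul]
    simp [tpowEquiv_tprod]
  rw [iSup_congr hstep]
  apply le_antisymm
  · refine iSup_le fun k => iSup_le fun hk => ?_
    apply Submodule.span_mono
    rw [Set.singleton_subset_iff]
    exact ⟨k.val, hk, rfl⟩
  · rw [Ideal.span_le]
    rintro x ⟨k, hk, rfl⟩
    simp only [Set.mem_setOf_eq] at hk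
    have hk1 : k < s + 1 := by omega
    refine Submodule.mem_iSup_of_mem ⟨k, hk1⟩ ?_
    refine Submodule.mem_iSup_of_mem hk ?_
    exact Submodule.subset_span rfl

noncomputable def gammaTopEquiv (s : ℕ) : (GammaSub R R s) ≃ₗ[R] (⨂[R] _ : Fin s, R) :=
  (LinearEquiv.ofEq _ _ (gammaSub_eq_top R s)).trans Submodule.topEquiv

lemma gammaTopEquiv_map (s : ℕ) :
    ((divMulImage R s).comap (GammaSub R R s).subtype).map (gammaTopEquiv R s : _ →ₗ[R] _) =
      divMulImage R s := by
  ext x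
  simp only [Submodule.mem_map, Submodule.mem_comap]
  constructor
  · rintro ⟨y, hy, rfl⟩
    exact hy
  · intro hx
    exact ⟨⟨x, by rw [gammaSub_eq_top]; trivial⟩, hx, rfl⟩

noncomputable def cokerEquiv (s : ℕ) :
    divMulCoker R s ≃ₗ[R]
      R ⧸ Ideal.span ((fun n : ℕ => (n : R)) '' (↑((Finset.Ioo 0 s).image s.choose) : Set ℕ)) :=
  (Submodule.Quotient.equiv _ _ (gammaTopEquiv R s) (gammaTopEquiv_map R s)).trans
    (Submodule.Quotient.equiv _ _ (tpowEquiv R s) (divMulImage_map_eq R s))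

lemma coker_span_gcd (s : ℕ) :
    Ideal.span ((fun n : ℕ => (n : R)) '' (↑((Finset.Ioo 0 s).image s.choose) : Set ℕ)) =
      Ideal.span {(((Finset.Ioo 0 s).gcd s.choose : ℕ) : R)} := by
  rw [span_natCast_finset]
  congr 2
  rw [Finset.gcd_image]
  rfl

end Coker

/-- For `s ≥ 2`: if `s` is not a prime power, the cokernel of the divided-power
multiplication map `⊕_{0<k<s} Γ^k(R) ⊗ Γ^{s-k}(R) → Γ^s(R)` is zero, and if `s = p^r` for
a prime `p` (with `r ≥ 1`), this cokernel is isomorphic to `R/pR`. -/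
theorem divMulCoker_classification (R : Type*) [CommRing R] (s : ℕ) (hs : 2 ≤ s) :
    ((¬ ∃ p r : ℕ, Nat.Prime p ∧ s = p ^ r) → Subsingleton (divMulCoker R s)) ∧
    (∀ p r : ℕ, Nat.Prime p → 0 < r → s = p ^ r →
      Nonempty ((divMulCoker R s) ≃ₗ[R] R ⧸ (Ideal.span {(p : R)}))) := by
  constructor
  · intro hnp
    have hd : (Finset.Ioo 0 s).gcd s.choose = 1 := gcd_choose_eq_one_s17 s hs hnp
    have hJ : Ideal.span ((fun n : ℕ => (n : R)) ''
        (↑((Finset.Ioo 0 s).image s.choose) : Set ℕ)) = ⊤ := by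
      rw [coker_span_gcd, hd]
      simp [Ideal.span_singleton_one]
    have hsub : Subsingleton (R ⧸ Ideal.span ((fun n : ℕ => (n : R)) ''
        (↑((Finset.Ioo 0 s).image s.choose) : Set ℕ))) := by
      rw [Submodule.Quotient.subsingleton_iff]
      exact hJ
    exact Equiv.subsingleton (cokerEquiv R s).toEquiv
  · intro p r hp hr hspr
    subst hspr
    have hd : (Finset.Ioo 0 (p ^ r)).gcd (p ^ r).choose = p := gcd_choose_eq_prime p r hp hr
    refine ⟨(cokerEquiv R (p ^ r)).trans (Submodule.quotEquivOfEq _ _ ?_)⟩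
    rw [coker_span_gcd, hd]
end
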